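/- arXiv:1701.06119 — 11 statements merged into one kernel-verified Lean document; each statement's English description precedes it below -/
import Mathlib

section
/- For every function f : X × X → ℝ with f(x,y) > 0 for all (x,y) ∈ E, there exist a Markov kernel w ∈ W(X,E), a real number Z > 0, and a function γ : X → (0,∞) such that w(y|x) = (1/Z) · (γ(y)/γ(x)) · f(x,y) for every (x,y) ∈ E. -/
open scoped BigOperators

/-- The directed graph `(X, E)` is strongly connected: any vertex can be reached
from any other by a path of length at least one along edges in `E`. -/
def StronglyConnected {X : Type*} (E : Finset (X × X)) : Prop :=
  ∀ x y : X, Relation.TransGen (fun a b => (a, b) ∈ E) x y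

/-- `w` is a Markov kernel on `(X, E)` (an element of `W(X,E)`):
`w x y` denotes `w(y|x)`, is nonnegative, sums to one over `y`,
and is positive exactly on the edge set `E`. -/
def IsMarkovKernel {X : Type*} [Fintype X] (E : Finset (X × X)) (w : X → X → ℝ) : Prop :=
  (∀ x y, 0 ≤ w x y) ∧ (∀ x, ∑ y, w x y = 1) ∧ (∀ x y, (0 < w x y ↔ (x, y) ∈ E))

/-- Entries of powers of a nonnegative matrix are nonnegative and dominated by
the corresponding power of `1 + A`. -/
private lemma pf_pow_nonneg_le {X : Type*} [Fintype X] [DecidableEq X]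
    (A : Matrix X X ℝ) (hA : ∀ x y, 0 ≤ A x y) :
    ∀ k, ∀ x y, 0 ≤ (A ^ k) x y ∧ (A ^ k) x y ≤ ((1 + A) ^ k) x y := by
  have hone : ∀ z y : X, (0 : ℝ) ≤ (1 : Matrix X X ℝ) z y := by
    intro z y; rw [Matrix.one_apply]; split <;> norm_num
  intro k
  induction k with
  | zero => intro x y; exact ⟨hone x y, le_refl _⟩
  | succ k ih =>
    intro x y
    rw [pow_succ, pow_succ, Matrix.mul_apply, Matrix.mul_apply]
    constructor
    · exact Finset.sum_nonneg fun z _ => mul_nonneg (ih x z).1 (hA z y)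
    · refine Finset.sum_le_sum fun z _ => mul_le_mul (ih x z).2 ?_ (hA z y)
        (le_trans (ih x z).1 (ih x z).2)
      have h1 : (1 + A) z y = (1 : Matrix X X ℝ) z y + A z y := rfl
      have h2 := hone z y
      rw [h1]; linarith

private lemma pf_Bpow_nonneg {X : Type*} [Fintype X] [DecidableEq X]
    (A : Matrix X X ℝ) (hA : ∀ x y, 0 ≤ A x y) (k : ℕ) (x y : X) :
    0 ≤ ((1 + A) ^ k) x y :=
  le_trans (pf_pow_nonneg_le A hA k x y).1 (pf_pow_nonneg_le A hA k x y).2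

/-- Entries of powers of `1 + A` are monotone in the exponent. -/
private lemma pf_Bpow_mono {X : Type*} [Fintype X] [DecidableEq X]
    (A : Matrix X X ℝ) (hA : ∀ x y, 0 ≤ A x y) {k m : ℕ} (hkm : k ≤ m) (x y : X) :
    ((1 + A) ^ k) x y ≤ ((1 + A) ^ m) x y := by
  have hB : ∀ z y : X, (0 : ℝ) ≤ (1 + A) z y := fun z y => by
    have h := pf_Bpow_nonneg A hA 1 z y
    rwa [pow_one] at h
  have hBdiag : ∀ y : X, (1 : ℝ) ≤ (1 + A) y y := by
    intro y
    have h1 : (1 + A) y y = (1 : Matrix X X ℝ) y y + A y y := rfl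
    rw [h1, Matrix.one_apply_eq]
    have := hA y y; linarith
  induction m with
  | zero =>
    have : k = 0 := Nat.le_zero.mp hkm
    subst this; exact le_refl _
  | succ m ih =>
    rcases Nat.lt_or_ge k (m + 1) with h | h
    · have h0 : ((1 + A) ^ k) x y ≤ ((1 + A) ^ m) x y := ih (Nat.lt_succ_iff.mp h)
      refine le_trans h0 ?_
      rw [pow_succ, Matrix.mul_apply]
      have hterm : ((1 + A) ^ m) x y * (1 + A) y y ≤
          ∑ z, ((1 + A) ^ m) x z * (1 + A) z y :=
        Finset.single_le_sum (f := fun z => ((1 + A) ^ m) x z * (1 + A) z y)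
          (fun z _ => mul_nonneg (pf_Bpow_nonneg A hA m x z) (hB z y)) (Finset.mem_univ y)
      have h2 : ((1 + A) ^ m) x y ≤ ((1 + A) ^ m) x y * (1 + A) y y :=
        le_mul_of_one_le_right (pf_Bpow_nonneg A hA m x y) (hBdiag y)
      linarith
    · have : k = m + 1 := le_antisymm hkm h
      subst this; exact le_refl _

/-- Perron–Frobenius type existence. For every function
`f` positive on `E` there exist a Markov kernel `w ∈ W(X,E)`, a constant `Z > 0` and
a positive function `γ` with `w(y|x) = (1/Z) (γ(y)/γ(x)) f(x,y)` on `E`. -/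
theorem markov_normalization_exists
    {X : Type*} [Fintype X] [DecidableEq X] (hX : 2 ≤ Fintype.card X)
    (E : Finset (X × X)) (hconn : StronglyConnected E)
    (f : X → X → ℝ) (hf : ∀ x y, (x, y) ∈ E → 0 < f x y) :
    ∃ (w : X → X → ℝ) (Z : ℝ) (γ : X → ℝ),
      IsMarkovKernel E w ∧ 0 < Z ∧ (∀ x, 0 < γ x) ∧
      ∀ x y, (x, y) ∈ E → w x y = (1 / Z) * (γ y / γ x) * f x y := by
  classical
  haveI hXne : Nonempty X := Fintype.card_pos_iff.mp (by omega)
  set n : ℕ := Fintype.card X with hn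
  have hnpos : 0 < (n : ℝ) := by exact_mod_cast (by omega : 0 < n)
  -- the base matrix
  set A : Matrix X X ℝ := Matrix.of (fun x y => if (x, y) ∈ E then f x y else 0) with hAdef
  have hA0 : ∀ x y, 0 ≤ A x y := by
    intro x y
    show (0:ℝ) ≤ if (x, y) ∈ E then f x y else 0
    split
    · exact (hf x y ‹_›).le
    · exact le_refl 0
  have hApos : ∀ x y, (x, y) ∈ E → 0 < A x y := by
    intro x y h
    show (0:ℝ) < if (x, y) ∈ E then f x y else 0
    rw [if_pos h]; exact hf x y h
  have hAeq : ∀ x y, (x, y) ∈ E → A x y = f x y := by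
    intro x y h
    show (if (x, y) ∈ E then f x y else 0) = f x y
    rw [if_pos h]
  -- connectivity gives positive entries of powers
  have hk : ∀ x y : X, ∃ k, 0 < (A ^ k) x y := by
    intro x y
    have h := hconn x y
    induction h with
    | single h => exact ⟨1, by rw [pow_one]; exact hApos _ _ h⟩
    | @tail b c h1 h2 ih =>
      obtain ⟨k, hk⟩ := ih
      refine ⟨k + 1, ?_⟩
      rw [pow_succ, Matrix.mul_apply]
      have hterm : 0 < (A ^ k) x b * A b c := mul_pos hk (hApos _ _ h2)
      have hle : (A ^ k) x b * A b c ≤ ∑ z, (A ^ k) x z * A z c :=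
        Finset.single_le_sum (f := fun z => (A ^ k) x z * A z c)
          (fun z _ => mul_nonneg (pf_pow_nonneg_le A hA0 k x z).1 (hA0 z c))
          (Finset.mem_univ b)
      linarith
  -- a power of 1 + A with all entries positive
  set m : ℕ := Finset.univ.sup (fun p : X × X => (hk p.1 p.2).choose) with hm
  set P : Matrix X X ℝ := (1 + A) ^ m with hP
  have hPpos : ∀ x y, 0 < P x y := by
    intro x y
    have hc := (hk x y).choose_spec
    have h1 : (hk x y).choose ≤ m :=
      Finset.le_sup (f := fun p : X × X => (hk p.1 p.2).choose) (Finset.mem_univ (x, y))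
    calc (0:ℝ) < (A ^ (hk x y).choose) x y := hc
      _ ≤ ((1 + A) ^ (hk x y).choose) x y := (pf_pow_nonneg_le A hA0 _ x y).2
      _ ≤ ((1 + A) ^ m) x y := pf_Bpow_mono A hA0 h1 x y
  -- multiplication by P sends nonzero nonnegative vectors to positive vectors
  have hmv : ∀ (M : Matrix X X ℝ) (v : X → ℝ) (x : X), M.mulVec v x = ∑ y, M x y * v y :=
    fun M v x => rfl
  have hPv : ∀ (v : X → ℝ), (∀ x, 0 ≤ v x) → (∃ y, 0 < v y) → ∀ x, 0 < P.mulVec v x := by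
    rintro v hv ⟨y0, hy0⟩ x
    rw [hmv]
    have hterm : 0 < P x y0 * v y0 := mul_pos (hPpos x y0) hy0
    have hle : P x y0 * v y0 ≤ ∑ y, P x y * v y :=
      Finset.single_le_sum (f := fun y => P x y * v y)
        (fun y _ => mul_nonneg (hPpos x y).le (hv y)) (Finset.mem_univ y0)
    linarith
  -- Collatz–Wielandt bound
  have huniv : (Finset.univ : Finset X).Nonempty := Finset.univ_nonempty
  set R0 : ℝ := Finset.univ.sup' huniv (fun y => ∑ x, A x y) with hR0def
  have hR0bound : ∀ γ : X → ℝ, (∀ x, 0 ≤ γ x) → (∑ x, γ x = 1) →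
      ∀ ρ : ℝ, (∀ x, ρ * γ x ≤ A.mulVec γ x) → ρ ≤ R0 := by
    intro γ hγ hs ρ hρ
    have h1 : ρ = ∑ x, ρ * γ x := by rw [← Finset.mul_sum, hs, mul_one]
    have h2 : ∑ x, ρ * γ x ≤ ∑ x, A.mulVec γ x := Finset.sum_le_sum fun x _ => hρ x
    have h3 : ∑ x, A.mulVec γ x = ∑ y, (∑ x, A x y) * γ y := by
      simp only [hmv]
      rw [Finset.sum_comm]
      exact Finset.sum_congr rfl fun y _ => by rw [Finset.sum_mul]
    have h4 : ∑ y, (∑ x, A x y) * γ y ≤ ∑ y, R0 * γ y :=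
      Finset.sum_le_sum fun y _ =>
        mul_le_mul_of_nonneg_right
          (Finset.le_sup' (fun y => ∑ x, A x y) (Finset.mem_univ y)) (hγ y)
    have h5 : ∑ y, R0 * γ y = R0 := by rw [← Finset.mul_sum, hs, mul_one]
    linarith
  have hR0nn : 0 ≤ R0 := by
    obtain ⟨y0⟩ := hXne
    have := Finset.le_sup' (fun y => ∑ x, A x y) (Finset.mem_univ y0)
    have h2 : 0 ≤ ∑ x, A x y0 := Finset.sum_nonneg fun x _ => hA0 x y0
    linarith
  set R : ℝ := R0 + 1 with hRdef
  have hR1 : 1 ≤ R := by linarith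
  -- the compact feasible set
  set Cs : Set (ℝ × (X → ℝ)) :=
    {p | (∀ x, 0 ≤ p.2 x) ∧ (∑ x, p.2 x = 1) ∧ 0 ≤ p.1 ∧ p.1 ≤ R ∧
      ∀ x, p.1 * p.2 x ≤ A.mulVec p.2 x} with hCs
  have hCs_sub : Cs ⊆ Set.Icc (0:ℝ) R ×ˢ Set.Icc (0 : X → ℝ) 1 := by
    rintro ⟨ρ, γ⟩ ⟨h1, h2, h3, h4, h5⟩
    refine ⟨⟨h3, h4⟩, ?_, ?_⟩
    · intro x; exact h1 x
    · intro x
      have := Finset.single_le_sum (f := γ) (fun y _ => h1 y) (Finset.mem_univ x)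
      show γ x ≤ 1
      linarith [h2 ▸ this]
  have hCs_closed : IsClosed Cs := by
    have c1 : IsClosed {p : ℝ × (X → ℝ) | ∀ x, 0 ≤ p.2 x} := by
      rw [Set.setOf_forall]
      exact isClosed_iInter fun x =>
        isClosed_le continuous_const ((continuous_apply x).comp continuous_snd)
    have c2 : IsClosed {p : ℝ × (X → ℝ) | ∑ x, p.2 x = 1} :=
      isClosed_eq (by fun_prop) continuous_const
    have c3 : IsClosed {p : ℝ × (X → ℝ) | 0 ≤ p.1} := isClosed_le continuous_const continuous_fst
    have c4 : IsClosed {p : ℝ × (X → ℝ) | p.1 ≤ R} := isClosed_le continuous_fst continuous_const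
    have c5 : IsClosed {p : ℝ × (X → ℝ) | ∀ x, p.1 * p.2 x ≤ A.mulVec p.2 x} := by
      rw [Set.setOf_forall]
      refine isClosed_iInter fun x => ?_
      have : {p : ℝ × (X → ℝ) | p.1 * p.2 x ≤ A.mulVec p.2 x}
          = {p : ℝ × (X → ℝ) | p.1 * p.2 x ≤ ∑ y, A x y * p.2 y} := by
        ext p; simp only [Set.mem_setOf_eq, hmv]
      rw [this]
      exact isClosed_le (by fun_prop) (by fun_prop)
    have : Cs = {p : ℝ × (X → ℝ) | ∀ x, 0 ≤ p.2 x} ∩ ({p | ∑ x, p.2 x = 1} ∩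
        ({p | 0 ≤ p.1} ∩ ({p | p.1 ≤ R} ∩ {p | ∀ x, p.1 * p.2 x ≤ A.mulVec p.2 x}))) := by
      ext p
      simp only [hCs, Set.mem_setOf_eq, Set.mem_inter_iff]
    rw [this]
    exact c1.inter (c2.inter (c3.inter (c4.inter c5)))
  have hCs_cpt : IsCompact Cs :=
    IsCompact.of_isClosed_subset (isCompact_Icc.prod isCompact_Icc) hCs_closed hCs_sub
  -- the uniform vector
  set u : X → ℝ := fun _ => (n : ℝ)⁻¹ with hu
  have husum : ∑ x, u x = 1 := by
    simp [hu, Finset.sum_const, ← hn]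
  have hu0 : ∀ x, 0 ≤ u x := fun x => by positivity
  have hCs_ne : Cs.Nonempty := by
    refine ⟨(0, u), hu0, husum, le_refl 0, (show (0:ℝ) ≤ R by linarith), fun x => ?_⟩
    rw [zero_mul, hmv]
    exact Finset.sum_nonneg fun y _ => mul_nonneg (hA0 x y) (hu0 y)
  -- maximize ρ over Cs
  obtain ⟨⟨r, γ⟩, hmem, hmax⟩ := hCs_cpt.exists_isMaxOn hCs_ne continuous_fst.continuousOn
  obtain ⟨hγ0, hγsum, hr0, hrR, hrcon⟩ := hmem
  have hmax' : ∀ q ∈ Cs, q.1 ≤ r := fun q hq => hmax hq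
  -- r is positive
  have hAu_pos : ∀ x, 0 < A.mulVec u x := by
    intro x
    obtain ⟨z, hz, -⟩ := Relation.TransGen.head'_iff.mp (hconn x x)
    rw [hmv]
    have hterm : 0 < A x z * u z := mul_pos (hApos x z hz) (by positivity)
    have hle : A x z * u z ≤ ∑ y, A x y * u y :=
      Finset.single_le_sum (f := fun y => A x y * u y)
        (fun y _ => mul_nonneg (hA0 x y) (hu0 y)) (Finset.mem_univ z)
    linarith
  have hrpos : 0 < r := by
    set c : ℝ := Finset.univ.inf' huniv (fun x => A.mulVec u x) with hc
    have hcpos : 0 < c := (Finset.lt_inf'_iff huniv).mpr fun x _ => hAu_pos x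
    set ρ0 : ℝ := min ((n : ℝ) * c) 1 with hρ0
    have hρ0pos : 0 < ρ0 := lt_min (by positivity) one_pos
    have : (ρ0, u) ∈ Cs := by
      refine ⟨hu0, husum, hρ0pos.le, le_trans (min_le_right _ _) hR1, fun x => ?_⟩
      have h1 : ρ0 * u x ≤ (n : ℝ) * c * (n : ℝ)⁻¹ := by
        have : u x = (n : ℝ)⁻¹ := rfl
        rw [this]
        exact mul_le_mul_of_nonneg_right (min_le_left _ _) (by positivity)
      have h2 : (n : ℝ) * c * (n : ℝ)⁻¹ = c := by field_simp
      have h3 : c ≤ A.mulVec u x := Finset.inf'_le _ (Finset.mem_univ x)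
      linarith
    have := hmax' _ this
    simp only at this
    linarith
  -- the eigen-equation
  have hAr : ∀ x, A.mulVec γ x = r * γ x := by
    by_contra hne
    push_neg at hne
    obtain ⟨x0, hx0⟩ := hne
    set δ : X → ℝ := fun x => A.mulVec γ x - r * γ x with hδ
    have hδ0 : ∀ x, 0 ≤ δ x := fun x => by
      have := hrcon x; simp only [hδ]; linarith
    have hδne : ∃ x, 0 < δ x := ⟨x0, lt_of_le_of_ne (hδ0 x0) (by
      simp only [hδ]; intro h; exact hx0 (by linarith [h.symm ▸ (rfl : (0:ℝ) = 0)]))⟩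
    have hγex : ∃ y, 0 < γ y := by
      by_contra h
      push_neg at h
      have : ∑ x, γ x ≤ 0 := Finset.sum_nonpos fun x _ => h x
      linarith
    set η : X → ℝ := P.mulVec γ with hη
    have hηpos : ∀ x, 0 < η x := hPv γ hγ0 hγex
    have hPδpos : ∀ x, 0 < P.mulVec δ x := hPv δ hδ0 hδne
    have hcomm : A * P = P * A :=
      (((Commute.one_right A).add_right (Commute.refl A)).pow_right m).eq
    have hkey : ∀ x, P.mulVec δ x = A.mulVec η x - r * η x := by
      have e0 : δ = A.mulVec γ - r • γ := by
        funext x; simp [hδ, Pi.sub_apply, Pi.smul_apply, smul_eq_mul]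
      have e1 : P.mulVec δ = P.mulVec (A.mulVec γ) - r • P.mulVec γ := by
        rw [e0, Matrix.mulVec_sub, Matrix.mulVec_smul]
      have e2 : P.mulVec (A.mulVec γ) = A.mulVec η := by
        rw [hη, Matrix.mulVec_mulVec, Matrix.mulVec_mulVec, hcomm]
      intro x
      rw [e1, e2]
      simp [Pi.sub_apply, Pi.smul_apply, smul_eq_mul, hη]
    have hstrict : ∀ x, r * η x < A.mulVec η x := by
      intro x
      have := hPδpos x
      rw [hkey x] at this
      linarith
    set s : ℝ := ∑ x, η x with hs
    have hspos : 0 < s := Finset.sum_pos (fun x _ => hηpos x) huniv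
    set η' : X → ℝ := fun x => η x / s with hη'
    have hη'pos : ∀ x, 0 < η' x := fun x => div_pos (hηpos x) hspos
    have hη'sum : ∑ x, η' x = 1 := by
      simp only [hη']
      rw [← Finset.sum_div, ← hs]
      field_simp
    have hAη' : ∀ x, A.mulVec η' x = A.mulVec η x / s := by
      intro x
      simp only [hmv, hη']
      rw [Finset.sum_div]
      exact Finset.sum_congr rfl fun y _ => (mul_div_assoc _ _ _).symm
    have hstrict' : ∀ x, r * η' x < A.mulVec η' x := by
      intro x
      rw [hAη' x]
      have h1 : η' x = η x / s := rfl
      calc r * η' x = (r * η x) / s := by rw [h1]; ring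
        _ < A.mulVec η x / s := div_lt_div_of_pos_right (hstrict x) hspos
    set ρ : ℝ := Finset.univ.inf' huniv (fun x => A.mulVec η' x / η' x) with hρ
    have hrρ : r < ρ :=
      (Finset.lt_inf'_iff huniv).mpr fun x _ =>
        (lt_div_iff₀ (hη'pos x)).mpr (by have := hstrict' x; linarith [mul_comm r (η' x)])
    have hρcon : ∀ x, ρ * η' x ≤ A.mulVec η' x := fun x =>
      (le_div_iff₀ (hη'pos x)).mp (Finset.inf'_le _ (Finset.mem_univ x))
    have hrR0 : r ≤ R0 := hR0bound γ hγ0 hγsum r hrcon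
    have hmem2 : (min ρ R, η') ∈ Cs := by
      refine ⟨fun x => (hη'pos x).le, hη'sum, le_min (by linarith) (by linarith),
        min_le_right _ _, fun x => ?_⟩
      have := hρcon x
      have h1 : min ρ R * η' x ≤ ρ * η' x :=
        mul_le_mul_of_nonneg_right (min_le_left _ _) (hη'pos x).le
      linarith
    have hle := hmax' _ hmem2
    simp only at hle
    have : r < min ρ R := lt_min hrρ (by linarith)
    linarith
  -- positivity of γ
  have hγex : ∃ y, 0 < γ y := by
    by_contra h
    push_neg at h
    have : ∑ x, γ x ≤ 0 := Finset.sum_nonpos fun x _ => h x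
    linarith
  have hBγ : (1 + A).mulVec γ = (1 + r) • γ := by
    rw [Matrix.add_mulVec, Matrix.one_mulVec]
    funext x
    simp only [Pi.add_apply, Pi.smul_apply, smul_eq_mul, hAr x]
    ring
  have hPow : ∀ k : ℕ, ((1 + A) ^ k).mulVec γ = ((1 + r) ^ k) • γ := by
    intro k
    induction k with
    | zero => simp [Matrix.one_mulVec]
    | succ k ih =>
      rw [pow_succ, ← Matrix.mulVec_mulVec, hBγ, Matrix.mulVec_smul, ih, smul_smul, pow_succ]
      rw [mul_comm ((1 + r) ^ k) (1 + r), mul_comm]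
  have hγpos : ∀ x, 0 < γ x := by
    intro x
    have h1 : 0 < P.mulVec γ x := hPv γ hγ0 hγex x
    have h2 : P.mulVec γ x = (1 + r) ^ m * γ x := by
      rw [hP, hPow m]; simp [Pi.smul_apply, smul_eq_mul]
    rw [h2] at h1
    have h3 : 0 < (1 + r) ^ m := pow_pos (by linarith) m
    nlinarith
  -- assemble the kernel
  refine ⟨fun x y => if (x, y) ∈ E then (1 / r) * (γ y / γ x) * f x y else 0, r, γ,
    ⟨?_, ?_, ?_⟩, hrpos, hγpos, ?_⟩
  · intro x y
    show (0:ℝ) ≤ if (x, y) ∈ E then (1 / r) * (γ y / γ x) * f x y else 0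
    split
    · have := hf x y ‹_›
      have := hγpos x
      have := hγpos y
      positivity
    · exact le_refl 0
  · intro x
    have hweq : ∀ y, (if (x, y) ∈ E then (1 / r) * (γ y / γ x) * f x y else 0)
        = A x y * γ y / (r * γ x) := by
      intro y
      by_cases h : (x, y) ∈ E
      · rw [if_pos h, hAeq x y h]
        have h1 : r ≠ 0 := hrpos.ne'
        have h2 : γ x ≠ 0 := (hγpos x).ne'
        field_simp
      · rw [if_neg h]
        have : A x y = 0 := by
          show (if (x, y) ∈ E then f x y else 0) = 0
          rw [if_neg h]
        rw [this, zero_mul, zero_div]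
    show ∑ y, (if (x, y) ∈ E then (1 / r) * (γ y / γ x) * f x y else 0) = 1
    calc ∑ y, (if (x, y) ∈ E then (1 / r) * (γ y / γ x) * f x y else 0)
        = ∑ y, A x y * γ y / (r * γ x) := Finset.sum_congr rfl fun y _ => hweq y
      _ = (∑ y, A x y * γ y) / (r * γ x) := by rw [Finset.sum_div]
      _ = (r * γ x) / (r * γ x) := by rw [← hmv, hAr x]
      _ = 1 := div_self (mul_pos hrpos (hγpos x)).ne'
  · intro x y
    show (0 < if (x, y) ∈ E then (1 / r) * (γ y / γ x) * f x y else 0) ↔ (x, y) ∈ E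
    constructor
    · intro h
      by_contra hne
      rw [if_neg hne] at h
      exact lt_irrefl 0 h
    · intro h
      rw [if_pos h]
      have := hf x y h
      have := hγpos x
      have := hγpos y
      positivity
  · intro x y h
    show (if (x, y) ∈ E then (1 / r) * (γ y / γ x) * f x y else 0) = (1 / r) * (γ y / γ x) * f x y
    rw [if_pos h]
end

section
/- Let f : X × X → ℝ satisfy f(x,y) > 0 for all (x,y) ∈ E. If (w, Z, γ) and (w', Z', γ') both consist of a Markov kernel in W(X,E), a positive real number, and a positive function on X such that w(y|x) = (1/Z)(γ(y)/γ(x)) f(x,y) and w'(y|x) = (1/Z')(γ'(y)/γ'(x)) f(x,y) for all (x,y) ∈ E, then w = w', Z = Z', and there exists a constant c > 0 with γ'(x) = c · γ(x) for all x ∈ X. -/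
open scoped BigOperators

/-- Perron–Frobenius type uniqueness. If `(w, Z, γ)` and
`(w', Z', γ')` both normalize the same positive function `f` on `E`, then
`w = w'`, `Z = Z'` and `γ' = c • γ` for some constant `c > 0`. -/
theorem markov_normalization_unique
    {X : Type*} [Fintype X] [DecidableEq X] (hX : 2 ≤ Fintype.card X)
    (E : Finset (X × X)) (hconn : StronglyConnected E)
    (f : X → X → ℝ) (hf : ∀ x y, (x, y) ∈ E → 0 < f x y)
    (w w' : X → X → ℝ) (Z Z' : ℝ) (γ γ' : X → ℝ)
    (hw : IsMarkovKernel E w) (hZ : 0 < Z) (hγ : ∀ x, 0 < γ x)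
    (heq : ∀ x y, (x, y) ∈ E → w x y = (1 / Z) * (γ y / γ x) * f x y)
    (hw' : IsMarkovKernel E w') (hZ' : 0 < Z') (hγ' : ∀ x, 0 < γ' x)
    (heq' : ∀ x y, (x, y) ∈ E → w' x y = (1 / Z') * (γ' y / γ' x) * f x y) :
    w = w' ∧ Z = Z' ∧ ∃ c : ℝ, 0 < c ∧ ∀ x, γ' x = c * γ x := by
  obtain ⟨hw0, hw1, hwE⟩ := hw
  obtain ⟨hw0', hw1', hwE'⟩ := hw'
  have hXne : (Finset.univ : Finset X).Nonempty := by
    rw [Finset.univ_nonempty_iff]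
    exact Fintype.card_pos_iff.mp (by omega)
  set r : X → ℝ := fun x => γ' x / γ x with hr
  have hrpos : ∀ x, 0 < r x := fun x => div_pos (hγ' x) (hγ x)
  have hz : ∀ x y, (x, y) ∉ E → w x y = 0 := fun x y h =>
    le_antisymm (not_lt.1 fun hp => h ((hwE x y).1 hp)) (hw0 x y)
  have hz' : ∀ x y, (x, y) ∉ E → w' x y = 0 := fun x y h =>
    le_antisymm (not_lt.1 fun hp => h ((hwE' x y).1 hp)) (hw0' x y)
  -- eigen equation: ∑ y, w x y * r y = (Z'/Z) * r x
  have heig : ∀ x, ∑ y, w x y * r y = (Z' / Z) * r x := by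
    intro x
    have hterm : ∀ y, w' x y = (Z / Z') * (r y / r x) * w x y := by
      intro y
      by_cases hE : (x, y) ∈ E
      · rw [heq' x y hE, heq x y hE, hr]
        have h1 := (hγ x).ne'
        have h2 := (hγ y).ne'
        have h3 := (hγ' x).ne'
        field_simp
      · rw [hz' x y hE, hz x y hE]; ring
    have h1 : ∑ y, (Z / Z') * (r y / r x) * w x y = 1 := by
      rw [← hw1' x]
      exact Finset.sum_congr rfl fun y _ => (hterm y).symm
    have h3 : ∑ y, w x y * r y = ∑ y, ((Z' / Z) * r x) * ((Z / Z') * (r y / r x) * w x y) := by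
      apply Finset.sum_congr rfl
      intro y _
      have := (hrpos x).ne'
      field_simp
    rw [h3, ← Finset.mul_sum, h1, mul_one]
  -- max and min points of r
  obtain ⟨x₀, -, hmax⟩ := Finset.exists_max_image Finset.univ r hXne
  obtain ⟨x₁, -, hmin⟩ := Finset.exists_min_image Finset.univ r hXne
  have hmax' : ∀ y, r y ≤ r x₀ := fun y => hmax y (Finset.mem_univ y)
  have hmin' : ∀ y, r x₁ ≤ r y := fun y => hmin y (Finset.mem_univ y)
  -- Z = Z'
  have hle1 : ∑ y, w x₀ y * r y ≤ r x₀ := by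
    calc ∑ y, w x₀ y * r y ≤ ∑ y, w x₀ y * r x₀ :=
          Finset.sum_le_sum fun y _ => mul_le_mul_of_nonneg_left (hmax' y) (hw0 x₀ y)
      _ = r x₀ := by rw [← Finset.sum_mul, hw1, one_mul]
  have hle2 : r x₁ ≤ ∑ y, w x₁ y * r y := by
    calc r x₁ = ∑ y, w x₁ y * r x₁ := by rw [← Finset.sum_mul, hw1, one_mul]
      _ ≤ ∑ y, w x₁ y * r y :=
          Finset.sum_le_sum fun y _ => mul_le_mul_of_nonneg_left (hmin' y) (hw0 x₁ y)
  have hZZ : Z = Z' := by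
    have e1 := heig x₀
    have e2 := heig x₁
    have p0 := hrpos x₀
    have p1 := hrpos x₁
    rw [e1] at hle1
    rw [e2] at hle2
    rw [div_mul_eq_mul_div, div_le_iff₀ hZ] at hle1
    rw [div_mul_eq_mul_div, le_div_iff₀ hZ] at hle2
    nlinarith
  -- eigen equation with eigenvalue 1
  have heig1 : ∀ x, ∑ y, w x y * r y = r x := by
    intro x
    rw [heig x, ← hZZ, div_self hZ.ne', one_mul]
  -- maximum principle step
  have hstep : ∀ a, r a = r x₀ → ∀ b, (a, b) ∈ E → r b = r x₀ := by
    intro a ha b hb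
    have hsum : ∑ y, w a y * (r x₀ - r y) = 0 := by
      have h1 : ∑ y, w a y * (r x₀ - r y) = (∑ y, w a y * r x₀) - ∑ y, w a y * r y := by
        rw [← Finset.sum_sub_distrib]
        exact Finset.sum_congr rfl fun y _ => by ring
      rw [h1, ← Finset.sum_mul, hw1, one_mul, heig1, ha, sub_self]
    have hnn : ∀ y ∈ Finset.univ, 0 ≤ w a y * (r x₀ - r y) := fun y _ =>
      mul_nonneg (hw0 a y) (by linarith [hmax' y])
    have hzero := (Finset.sum_eq_zero_iff_of_nonneg hnn).1 hsum b (Finset.mem_univ b)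
    have hwb : 0 < w a b := (hwE a b).2 hb
    nlinarith [hmax' b]
  -- r is constant
  have hconst : ∀ z, r z = r x₀ := by
    intro z
    have h := hconn x₀ z
    induction h with
    | single hxy => exact hstep x₀ rfl _ hxy
    | tail _ hxy ih => exact hstep _ ih _ hxy
  have hγeq : ∀ x, γ' x = r x₀ * γ x := by
    intro x
    have h := hconst x
    simp only [hr] at h ⊢
    field_simp [(hγ x).ne', (hγ x₀).ne'] at h ⊢
    linarith
  refine ⟨?_, hZZ, r x₀, hrpos x₀, hγeq⟩
  funext x y
  by_cases hE : (x, y) ∈ E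
  · rw [heq x y hE, heq' x y hE, hγeq x, hγeq y, ← hZZ]
    have h1 := (hγ x).ne'
    have h2 := (hrpos x₀).ne'
    field_simp
  · rw [hz x y hE, hz' x y hE]
end

section
/- With d = |E| − |X|, there exist functions C, F_1, …, F_d : X × X → ℝ, K : ℝ^d × X → ℝ, and ψ : ℝ^d → ℝ such that, defining w_θ : X × X → ℝ by log w_θ(y|x) = C(x,y) + Σ_{i=1}^d θ^i F_i(x,y) + K_θ(y) − K_θ(x) − ψ(θ) for (x,y) ∈ E and w_θ(y|x) = 0 for (x,y) ∉ E, the map θ ↦ w_θ is a bijection from ℝ^d onto W(X,E); that is, W(X,E) is itself an exponential family of dimension |E| − |X|. -/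
open scoped BigOperators

set_option linter.unusedSectionVars false
set_option maxHeartbeats 1000000

namespace MKEF
variable {X : Type*} [Fintype X] [DecidableEq X]

variable {X : Type*} [Fintype X] [DecidableEq X]

def Walk (E : Finset (X × X)) : ℕ → X → X → Prop
  | 0, x, y => x = y
  | (k+1), x, y => ∃ z, (x, z) ∈ E ∧ Walk E k z y

variable {E : Finset (X × X)} {M : Matrix X X ℝ}

lemma Walk.tail' {k : ℕ} : ∀ {x y z : X}, Walk E k x y → (y, z) ∈ E → Walk E (k+1) x z := by
  induction k with
  | zero => intro x y z h hz; cases h; exact ⟨z, hz, rfl⟩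
  | succ k ih => rintro x y z ⟨a, ha, hw⟩ hz; exact ⟨a, ha, ih hw hz⟩

lemma walk_of_transGen {x y : X}
    (h : Relation.TransGen (fun a b => (a, b) ∈ E) x y) : ∃ k, 0 < k ∧ Walk E k x y := by
  induction h with
  | single h => exact ⟨1, Nat.one_pos, _, h, rfl⟩
  | tail _ h ih => obtain ⟨k, hk, hw⟩ := ih; exact ⟨k+1, Nat.succ_pos _, hw.tail' h⟩

lemma one_add_apply_nonneg (hM0 : ∀ x y, 0 ≤ M x y) (x y : X) : 0 ≤ (1 + M) x y := by
  rw [Matrix.add_apply]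
  by_cases h : x = y
  · subst h; rw [Matrix.one_apply_eq]; linarith [hM0 x x]
  · rw [Matrix.one_apply_ne h]; simpa using hM0 x y

lemma one_add_pow_nonneg (hM0 : ∀ x y, 0 ≤ M x y) :
    ∀ (k : ℕ) (x y : X), 0 ≤ ((1 + M) ^ k) x y := by
  intro k
  induction k with
  | zero => intro x y; rw [pow_zero]; by_cases h : x = y <;> simp [Matrix.one_apply, h]
  | succ k ih =>
      intro x y
      rw [pow_succ, Matrix.mul_apply]
      exact Finset.sum_nonneg fun z _ => mul_nonneg (ih x z) (one_add_apply_nonneg hM0 z y)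

lemma one_add_pow_pos (hM0 : ∀ x y, 0 ≤ M x y) (hME : ∀ x y, (x, y) ∈ E → 0 < M x y) :
    ∀ (k : ℕ) (x y : X), (∃ j ≤ k, Walk E j x y) → 0 < ((1 + M) ^ k) x y := by
  intro k
  induction k with
  | zero =>
      rintro x y ⟨j, hj, hw⟩
      interval_cases j
      cases hw
      simp [Matrix.one_apply]
  | succ k ih =>
      rintro x y ⟨j, hj, hw⟩
      rw [pow_succ', Matrix.mul_apply]
      match j, hw with
      | 0, hw =>
        cases hw
        have h1 : 0 < (1 + M) x x * ((1 + M) ^ k) x x := by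
          refine mul_pos ?_ (ih x x ⟨0, Nat.zero_le _, rfl⟩)
          rw [Matrix.add_apply, Matrix.one_apply_eq]
          have := hM0 x x; linarith
        refine lt_of_lt_of_le h1 ?_
        exact Finset.single_le_sum (f := fun z => (1 + M) x z * ((1 + M) ^ k) z x)
          (fun z _ => mul_nonneg (one_add_apply_nonneg hM0 x z) (one_add_pow_nonneg hM0 k z x))
          (Finset.mem_univ x)
      | (j'+1), ⟨z, hz, hw'⟩ =>
        have h1 : 0 < (1 + M) x z * ((1 + M) ^ k) z y := by
          refine mul_pos ?_ (ih z y ⟨j', Nat.lt_succ_iff.mp hj, hw'⟩)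
          rw [Matrix.add_apply]
          have h2 := hME x z hz
          have h3 : (0:ℝ) ≤ (1 : Matrix X X ℝ) x z := by
            by_cases h : x = z <;> simp [Matrix.one_apply, h]
          linarith
        refine lt_of_lt_of_le h1 ?_
        exact Finset.single_le_sum (f := fun a => (1 + M) x a * ((1 + M) ^ k) a y)
          (fun a _ => mul_nonneg (one_add_apply_nonneg hM0 x a) (one_add_pow_nonneg hM0 k a y))
          (Finset.mem_univ z)

lemma exists_pos_power (hconn : StronglyConnected E)
    (hM0 : ∀ x y, 0 ≤ M x y) (hME : ∀ x y, (x, y) ∈ E → 0 < M x y) :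
    ∃ N : ℕ, ∀ x y, 0 < ((1 + M) ^ N) x y := by
  have h : ∀ p : X × X, ∃ k, 0 < k ∧ Walk E k p.1 p.2 :=
    fun p => walk_of_transGen (hconn p.1 p.2)
  choose f hf1 hf2 using h
  refine ⟨Finset.univ.sup f, fun x y => ?_⟩
  exact one_add_pow_pos hM0 hME _ x y
    ⟨f (x, y), Finset.le_sup (Finset.mem_univ (x, y)), hf2 (x, y)⟩

lemma mulVec_apply' (M : Matrix X X ℝ) (v : X → ℝ) (x : X) :
    M.mulVec v x = ∑ y, M x y * v y := by
  simp [Matrix.mulVec, dotProduct]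

lemma perron [Nonempty X] (hconn : StronglyConnected E)
    (hM0 : ∀ x y, 0 ≤ M x y) (hME : ∀ x y, (x, y) ∈ E → 0 < M x y) :
    ∃ (lam : ℝ) (v : X → ℝ), 0 < lam ∧ (∀ x, 0 < v x) ∧
      ∀ x, ∑ y, M x y * v y = lam * v x := by
  classical
  obtain ⟨N, hA⟩ := exists_pos_power hconn hM0 hME
  set A := (1 + M) ^ N with hAdef
  have hA0 : ∀ x y, 0 ≤ A x y := fun x y => le_of_lt (hA x y)
  set R := ∑ x, ∑ y, M x y with hRdef
  set S : Set (ℝ × (X → ℝ)) :=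
    {p | p.2 ∈ stdSimplex ℝ X ∧ 0 ≤ p.1 ∧ ∀ x, p.1 * p.2 x ≤ ∑ y, M x y * p.2 y} with hSdef
  have hle1 : ∀ v ∈ stdSimplex ℝ X, ∀ y : X, v y ≤ 1 := by
    intro v hv y
    have := Finset.single_le_sum (f := v) (fun i _ => hv.1 i) (Finset.mem_univ y)
    rw [hv.2] at this; exact this
  have hbound : ∀ p ∈ S, p.1 ≤ R := by
    rintro ⟨lam, v⟩ ⟨hv, hl0, hineq⟩
    have h1 : lam = ∑ x, lam * v x := by
      rw [← Finset.mul_sum, hv.2, mul_one]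
    have h2 : ∑ x, lam * v x ≤ ∑ x, ∑ y, M x y * v y :=
      Finset.sum_le_sum fun x _ => hineq x
    have h3 : ∀ x : X, ∑ y, M x y * v y ≤ ∑ y, M x y := by
      intro x
      refine Finset.sum_le_sum fun y _ => ?_
      calc M x y * v y ≤ M x y * 1 := mul_le_mul_of_nonneg_left (hle1 v hv y) (hM0 x y)
        _ = M x y := mul_one _
    calc (lam, v).1 = ∑ x, lam * v x := h1
      _ ≤ ∑ x, ∑ y, M x y * v y := h2
      _ ≤ ∑ x, ∑ y, M x y := Finset.sum_le_sum fun x _ => h3 x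
      _ = R := rfl
  have hSclosed : IsClosed S := by
    have h1 : IsClosed {p : ℝ × (X → ℝ) | p.2 ∈ stdSimplex ℝ X} :=
      (isClosed_stdSimplex ℝ X).preimage continuous_snd
    have h2 : IsClosed {p : ℝ × (X → ℝ) | 0 ≤ p.1} :=
      isClosed_le continuous_const continuous_fst
    have h3 : IsClosed {p : ℝ × (X → ℝ) | ∀ x, p.1 * p.2 x ≤ ∑ y, M x y * p.2 y} := by
      have heq : {p : ℝ × (X → ℝ) | ∀ x, p.1 * p.2 x ≤ ∑ y, M x y * p.2 y}
          = ⋂ x, {p : ℝ × (X → ℝ) | p.1 * p.2 x ≤ ∑ y, M x y * p.2 y} := by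
        ext p; simp
      rw [heq]
      refine isClosed_iInter fun x => isClosed_le ?_ ?_
      · exact continuous_fst.mul ((continuous_apply x).comp continuous_snd)
      · exact continuous_finset_sum _ fun y _ =>
          continuous_const.mul ((continuous_apply y).comp continuous_snd)
    exact h1.inter (h2.inter h3)
  have hScompact : IsCompact S := by
    refine IsCompact.of_isClosed_subset ((isCompact_Icc (a := (0:ℝ)) (b := R)).prod
      (isCompact_stdSimplex ℝ X)) hSclosed ?_
    rintro ⟨lam, v⟩ hp
    exact ⟨⟨hp.2.1, hbound _ hp⟩, hp.1⟩
  have hSne : S.Nonempty := by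
    refine ⟨(0, fun _ => (Fintype.card X : ℝ)⁻¹),
      ⟨⟨fun x => inv_nonneg.mpr (Nat.cast_nonneg _), ?_⟩, le_refl 0, ?_⟩⟩
    · rw [Finset.sum_const, Finset.card_univ, nsmul_eq_mul]
      have : (Fintype.card X : ℝ) ≠ 0 := by
        exact_mod_cast Fintype.card_ne_zero
      field_simp
    · intro x
      rw [zero_mul]
      exact Finset.sum_nonneg fun y _ =>
        mul_nonneg (hM0 x y) (inv_nonneg.mpr (Nat.cast_nonneg _))
  obtain ⟨⟨lam, v⟩, hmem, hmax⟩ := hScompact.exists_isMaxOn hSne continuous_fst.continuousOn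
  obtain ⟨hvΔ, hlam0, hineq⟩ := hmem
  simp only at hvΔ hlam0 hineq
  have hmax' : ∀ p ∈ S, p.1 ≤ lam := fun p hp => hmax hp
  obtain ⟨y0, hy0⟩ : ∃ y0, 0 < v y0 := by
    by_contra h
    push_neg at h
    have : ∑ y, v y = 0 := le_antisymm (Finset.sum_nonpos fun y _ => h y)
      (Finset.sum_nonneg fun y _ => hvΔ.1 y)
    rw [hvΔ.2] at this; norm_num at this
  have hAmulpos : ∀ (z : X → ℝ), (∀ x, 0 ≤ z x) → ∀ x0, 0 < z x0 →
      ∀ x, 0 < A.mulVec z x := by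
    intro z hz x0 hx0 x
    rw [mulVec_apply']
    have h1 : 0 < A x x0 * z x0 := mul_pos (hA x x0) hx0
    refine lt_of_lt_of_le h1 ?_
    exact Finset.single_le_sum (f := fun y => A x y * z y)
      (fun y _ => mul_nonneg (hA0 x y) (hz y)) (Finset.mem_univ x0)
  have heq : ∀ x, ∑ y, M x y * v y = lam * v x := by
    by_contra hne
    push_neg at hne
    obtain ⟨x0, hx0⟩ := hne
    set z : X → ℝ := fun x => (∑ y, M x y * v y) - lam * v x with hzdef
    have hz0 : ∀ x, 0 ≤ z x := fun x => sub_nonneg.mpr (hineq x)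
    have hzx0 : 0 < z x0 := lt_of_le_of_ne (hz0 x0) (sub_ne_zero.mpr hx0).symm
    set u : X → ℝ := A.mulVec v with hudef
    have hu : ∀ x, 0 < u x := hAmulpos v hvΔ.1 y0 hy0
    have hMv : M.mulVec v = fun x => lam * v x + z x := by
      funext x
      rw [mulVec_apply']
      simp only [hzdef]
      ring
    have hcomm : M * A = A * M := by
      have h1 : Commute M (1 + M) := (Commute.one_right M).add_right (Commute.refl M)
      exact (h1.pow_right N).eq
    have hkey : M.mulVec u = fun x => lam * u x + A.mulVec z x := by
      have h1 : M.mulVec u = A.mulVec (M.mulVec v) := by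
        rw [hudef, Matrix.mulVec_mulVec, Matrix.mulVec_mulVec, hcomm]
      rw [h1, hMv]
      have h2 : (fun x => lam * v x + z x) = lam • v + z := by
        funext t; simp [Pi.smul_apply, smul_eq_mul]
      rw [h2, Matrix.mulVec_add, Matrix.mulVec_smul]
      funext x
      simp [hudef, Pi.smul_apply, smul_eq_mul]
    have hstrict : ∀ x, lam * u x < M.mulVec u x := by
      intro x
      have h2 : 0 < A.mulVec z x := hAmulpos z hz0 x0 hzx0 x
      calc lam * u x < lam * u x + A.mulVec z x := by linarith
        _ = M.mulVec u x := by rw [hkey]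
    set ε : ℝ := Finset.univ.inf' Finset.univ_nonempty
      (fun x => (M.mulVec u x - lam * u x) / u x) with hεdef
    have hε : 0 < ε := by
      rw [hεdef, Finset.lt_inf'_iff]
      intro x _
      exact div_pos (by linarith [hstrict x]) (hu x)
    have hεle : ∀ x, (lam + ε) * u x ≤ M.mulVec u x := by
      intro x
      have h1 : ε ≤ (M.mulVec u x - lam * u x) / u x :=
        Finset.inf'_le _ (Finset.mem_univ x)
      have h2 : ε * u x ≤ M.mulVec u x - lam * u x := by
        rw [← le_div_iff₀ (hu x)]; exact h1
      nlinarith [hu x]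
    set t : ℝ := ∑ x, u x with htdef
    have ht : 0 < t := Finset.sum_pos (fun x _ => hu x) Finset.univ_nonempty
    have hmemS : (lam + ε, fun x => u x / t) ∈ S := by
      refine ⟨⟨fun x => le_of_lt (div_pos (hu x) ht), ?_⟩, by linarith, ?_⟩
      · rw [← Finset.sum_div, ← htdef, div_self (ne_of_gt ht)]
      · intro x
        have h1 := hεle x
        rw [mulVec_apply'] at h1
        have h3 : ∑ y, M x y * (u y / t) = (∑ y, M x y * u y) / t := by
          rw [Finset.sum_div]
          exact Finset.sum_congr rfl fun y _ => (mul_div_assoc _ _ _).symm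
        show (lam + ε) * (u x / t) ≤ ∑ y, M x y * (u y / t)
        rw [h3]
        calc (lam + ε) * (u x / t) = ((lam + ε) * u x) / t := by ring
          _ ≤ (∑ y, M x y * u y) / t := by gcongr
    have hcontra : lam + ε ≤ lam := hmax' _ hmemS
    linarith
  have hAv : ∀ x, A.mulVec v x = (1 + lam) ^ N * v x := by
    have hstep : (1 + M).mulVec v = fun x => (1 + lam) * v x := by
      funext x
      rw [Matrix.add_mulVec, Matrix.one_mulVec]
      have h1 : M.mulVec v x = lam * v x := by rw [mulVec_apply']; exact heq x
      simp only [Pi.add_apply, h1]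
      ring
    have hind : ∀ k : ℕ, ((1 + M) ^ k).mulVec v = fun x => (1 + lam) ^ k * v x := by
      intro k
      induction k with
      | zero => funext x; simp [Matrix.one_mulVec]
      | succ k ih =>
          funext x
          rw [pow_succ', ← Matrix.mulVec_mulVec, ih]
          have h2 : (fun x => (1 + lam) ^ k * v x) = ((1 + lam) ^ k) • v := by
            funext t; simp
          rw [h2, Matrix.mulVec_smul, hstep]
          simp [pow_succ]
          ring
    intro x
    rw [hAdef, hind N]
  have h1lam : 0 < 1 + lam := by linarith
  have hvpos : ∀ x, 0 < v x := by
    intro x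
    have h1 : 0 < A.mulVec v x := hAmulpos v hvΔ.1 y0 hy0 x
    rw [hAv x] at h1
    have h2 : 0 < (1 + lam) ^ N := pow_pos h1lam N
    nlinarith
  have hlampos : 0 < lam := by
    obtain ⟨x⟩ := (inferInstance : Nonempty X)
    obtain ⟨k, hk, hw⟩ := walk_of_transGen (hconn x x)
    obtain ⟨zz, hz, -⟩ : ∃ zz, (x, zz) ∈ E ∧ Walk E (k-1) zz x := by
      match k, hw with
      | (k'+1), ⟨zz, hz, hw'⟩ => exact ⟨zz, hz, by simpa using hw'⟩
    have h1 : 0 < M x zz * v zz := mul_pos (hME x zz hz) (hvpos zz)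
    have h2 : M x zz * v zz ≤ ∑ y, M x y * v y :=
      Finset.single_le_sum (f := fun y => M x y * v y)
        (fun y _ => mul_nonneg (hM0 x y) (le_of_lt (hvpos y))) (Finset.mem_univ zz)
    have h3 : 0 < lam * v x := by rw [← heq x]; linarith
    rcases mul_pos_iff.mp h3 with ⟨h, _⟩ | ⟨_, h⟩
    · exact h
    · exact absurd (hvpos x) (not_lt.mpr h.le)
  exact ⟨lam, v, hlampos, hvpos, heq⟩


lemma walk_const {E : Finset (X × X)} {K : X → ℝ} {c : ℝ}
    (hK : ∀ x y, (x, y) ∈ E → K y = K x + c) :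
    ∀ {k : ℕ} {x y : X}, Walk E k x y → K y = K x + k * c := by
  intro k
  induction k with
  | zero => intro x y h; cases h; simp
  | succ k ih =>
      rintro x y ⟨z, hz, hw⟩
      rw [ih hw, hK _ _ hz]
      push_cast; ring
lemma markov_off {w : X → X → ℝ} (hw : IsMarkovKernel E w) {x y : X}
    (h : (x, y) ∉ E) : w x y = 0 := by
  by_contra hne
  exact h ((hw.2.2 x y).mp (lt_of_le_of_ne (hw.1 x y) (Ne.symm hne)))

lemma exists_kernel [Nonempty X] (hconn : StronglyConnected E) (H : X → X → ℝ) :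
    ∃ (w : X → X → ℝ) (K : X → ℝ) (ψ : ℝ), IsMarkovKernel E w ∧
      ∀ x y, (x, y) ∈ E → w x y = Real.exp (H x y + K y - K x - ψ) := by
  classical
  set M : Matrix X X ℝ := Matrix.of fun x y => if (x, y) ∈ E then Real.exp (H x y) else 0
    with hMdef
  have hM0 : ∀ x y, 0 ≤ M x y := by
    intro x y; by_cases h : (x, y) ∈ E <;> simp [hMdef, h] <;> positivity
  have hME : ∀ x y, (x, y) ∈ E → 0 < M x y := by
    intro x y h; simp [hMdef, h, Real.exp_pos]
  obtain ⟨lam, v, hlam, hv, heig⟩ := perron hconn hM0 hME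
  refine ⟨fun x y => M x y * v y / (lam * v x), fun x => Real.log (v x), Real.log lam,
    ⟨?_, ?_, ?_⟩, ?_⟩
  · intro x y
    show 0 ≤ M x y * v y / (lam * v x)
    exact div_nonneg (mul_nonneg (hM0 x y) (hv y).le) (mul_pos hlam (hv x)).le
  · intro x
    show ∑ y, M x y * v y / (lam * v x) = 1
    rw [← Finset.sum_div]
    rw [heig x, div_self (ne_of_gt (mul_pos hlam (hv x)))]
  · intro x y
    constructor
    · intro h
      have h' : 0 < M x y * v y / (lam * v x) := h
      by_contra hne
      have hz : M x y = 0 := by simp [hMdef, hne]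
      rw [hz, zero_mul, zero_div] at h'
      exact lt_irrefl 0 h'
    · intro h
      show 0 < M x y * v y / (lam * v x)
      exact div_pos (mul_pos (hME x y h) (hv y)) (mul_pos hlam (hv x))
  · intro x y h
    show M x y * v y / (lam * v x) =
      Real.exp (H x y + Real.log (v y) - Real.log (v x) - Real.log lam)
    have h1 : M x y = Real.exp (H x y) := by simp [hMdef, h]
    rw [h1, Real.exp_sub, Real.exp_sub, Real.exp_add, Real.exp_log (hv y),
      Real.exp_log (hv x), Real.exp_log hlam]
    field_simp

lemma kernel_unique [Nonempty X] (hconn : StronglyConnected E) {u w : X → X → ℝ}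
    (hu : IsMarkovKernel E u) (hw : IsMarkovKernel E w) (K : X → ℝ) (c : ℝ)
    (h : ∀ x y, (x, y) ∈ E → w x y = u x y * Real.exp (K y - K x - c)) :
    w = u := by
  classical
  have hall : ∀ x y, w x y = u x y * Real.exp (K y - K x - c) := by
    intro x y
    by_cases hxy : (x, y) ∈ E
    · exact h x y hxy
    · rw [markov_off hw hxy, markov_off hu hxy, zero_mul]
  set f : X → ℝ := fun x => Real.exp (K x) with hfdef
  have hf : ∀ x, 0 < f x := fun x => Real.exp_pos _
  have key : ∀ x, ∑ y, u x y * f y = Real.exp c * f x := by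
    intro x
    have h2 : ∑ y, w x y = 1 := hw.2.1 x
    have h3 : ∑ y, w x y = (∑ y, u x y * f y) * Real.exp (-(K x + c)) := by
      rw [Finset.sum_mul]
      refine Finset.sum_congr rfl fun y _ => ?_
      rw [hall x y, hfdef]
      rw [mul_assoc, ← Real.exp_add]
      congr 2
      ring
    rw [h2] at h3
    have h4 : (∑ y, u x y * f y) * Real.exp (-(K x + c)) = 1 := h3.symm
    rw [Real.exp_neg, ← div_eq_mul_inv,
      div_eq_one_iff_eq (ne_of_gt (Real.exp_pos _))] at h4
    rw [h4, Real.exp_add, hfdef]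
    ring
  -- exp c = 1
  obtain ⟨x1, -, hmax⟩ := Finset.exists_max_image Finset.univ f Finset.univ_nonempty
  obtain ⟨x2, -, hmin⟩ := Finset.exists_min_image Finset.univ f Finset.univ_nonempty
  have hmax' : ∀ y, f y ≤ f x1 := fun y => hmax y (Finset.mem_univ y)
  have hmin' : ∀ y, f x2 ≤ f y := fun y => hmin y (Finset.mem_univ y)
  have hle : Real.exp c ≤ 1 := by
    have h1 : Real.exp c * f x1 = ∑ y, u x1 y * f y := (key x1).symm
    have h2 : ∑ y, u x1 y * f y ≤ ∑ y, u x1 y * f x1 :=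
      Finset.sum_le_sum fun y _ => mul_le_mul_of_nonneg_left (hmax' y) (hu.1 x1 y)
    have h3 : ∑ y, u x1 y * f x1 = f x1 := by
      rw [← Finset.sum_mul, hu.2.1 x1, one_mul]
    have h4 : Real.exp c * f x1 ≤ f x1 := by rw [h1]; rw [h3] at h2; exact h2
    nlinarith [hf x1]
  have hge : 1 ≤ Real.exp c := by
    have h1 : Real.exp c * f x2 = ∑ y, u x2 y * f y := (key x2).symm
    have h2 : ∑ y, u x2 y * f x2 ≤ ∑ y, u x2 y * f y :=
      Finset.sum_le_sum fun y _ => mul_le_mul_of_nonneg_left (hmin' y) (hu.1 x2 y)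
    have h3 : ∑ y, u x2 y * f x2 = f x2 := by
      rw [← Finset.sum_mul, hu.2.1 x2, one_mul]
    have h4 : f x2 ≤ Real.exp c * f x2 := by rw [h1]; rw [h3] at h2; exact h2
    nlinarith [hf x2]
  have hec : Real.exp c = 1 := le_antisymm hle hge
  have hc0 : c = 0 := by
    have := Real.exp_injective (by rw [hec, Real.exp_zero] : Real.exp c = Real.exp 0)
    exact this
  have hharm : ∀ x, ∑ y, u x y * f y = f x := by
    intro x; rw [key x, hec, one_mul]
  -- the set where f attains its max is closed under edges
  have hprop : ∀ x, f x = f x1 → ∀ y, (x, y) ∈ E → f y = f x1 := by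
    intro x hx y hxy
    have h1 : ∑ y, u x y * (f x1 - f y) = 0 := by
      have h2 : ∑ y, u x y * (f x1 - f y) = (∑ y, u x y * f x1) - ∑ y, u x y * f y := by
        rw [← Finset.sum_sub_distrib]
        exact Finset.sum_congr rfl fun y _ => by ring
      rw [h2, ← Finset.sum_mul, hu.2.1 x, one_mul, hharm x, hx, sub_self]
    have h3 : ∀ y ∈ Finset.univ, 0 ≤ u x y * (f x1 - f y) :=
      fun y _ => mul_nonneg (hu.1 x y) (sub_nonneg.mpr (hmax' y))
    have h4 := (Finset.sum_eq_zero_iff_of_nonneg h3).mp h1 y (Finset.mem_univ y)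
    have h5 : 0 < u x y := (hu.2.2 x y).mpr hxy
    have h6 : f x1 - f y = 0 := by
      rcases mul_eq_zero.mp h4 with h | h
      · exact absurd h (ne_of_gt h5)
      · exact h
    linarith [hmax' y]
  have hconst : ∀ y, f y = f x1 := by
    intro y
    have h := hconn x1 y
    induction h with
    | single h => exact hprop x1 rfl _ h
    | tail _ hedge ih => exact hprop _ ih _ hedge
  funext x y
  have h1 : f y = f x := by rw [hconst y, hconst x]
  have h2 : K y = K x := Real.exp_injective h1
  rw [hall x y, h2, hc0, sub_self, sub_zero, Real.exp_zero, mul_one]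

/-- The "gradient plus constant" linear map. -/
noncomputable def T {X : Type*} (E : Finset (X × X)) :
    ((X → ℝ) × ℝ) →ₗ[ℝ] ({e : X × X // e ∈ E} → ℝ) where
  toFun p := fun e => p.1 e.1.2 - p.1 e.1.1 - p.2
  map_add' p q := by funext e; simp; ring
  map_smul' r p := by funext e; simp [smul_eq_mul]; ring

lemma T_apply {E : Finset (X × X)} (p : (X → ℝ) × ℝ) (e : {e : X × X // e ∈ E}) :
    T E p e = p.1 e.1.2 - p.1 e.1.1 - p.2 := rfl

lemma ker_T [Nonempty X] {E : Finset (X × X)} (hconn : StronglyConnected E) :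
    LinearMap.ker (T E) = Submodule.span ℝ {(((fun _ => (1:ℝ)) : X → ℝ), (0:ℝ))} := by
  apply le_antisymm
  · rintro ⟨K, c⟩ hp
    rw [LinearMap.mem_ker] at hp
    have hedge : ∀ x y, (x, y) ∈ E → K y = K x + c := by
      intro x y h
      have h1 := congrFun hp ⟨(x, y), h⟩
      rw [T_apply] at h1
      simp at h1
      linarith
    obtain ⟨x0⟩ := ‹Nonempty X›
    have hc : c = 0 := by
      obtain ⟨k, hk, hw⟩ := walk_of_transGen (hconn x0 x0)
      have h2 := walk_const hedge hw
      have hk' : (0:ℝ) < (k:ℝ) := by exact_mod_cast hk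
      nlinarith
    have hK : ∀ x, K x = K x0 := by
      intro x
      obtain ⟨k, hk, hw⟩ := walk_of_transGen (hconn x0 x)
      have h2 := walk_const hedge hw
      rw [h2, hc]; simp
    rw [Submodule.mem_span_singleton]
    refine ⟨K x0, ?_⟩
    refine Prod.ext ?_ ?_
    · funext x; simp [hK x]
    · simp [hc]
  · rw [Submodule.span_le]
    rintro p hp
    simp only [Set.mem_singleton_iff] at hp
    subst hp
    rw [SetLike.mem_coe, LinearMap.mem_ker]
    funext e
    rw [T_apply]
    simp

end MKEF

open MKEF in
/-- Corollary 1. With `d = |E| − |X|`, there exist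
`C, F₁, …, F_d : X × X → ℝ`, `K : ℝ^d × X → ℝ` and `ψ : ℝ^d → ℝ` such that the
kernels `w_θ` defined by
`log w_θ(y|x) = C(x,y) + Σᵢ θⁱ Fᵢ(x,y) + K_θ(y) − K_θ(x) − ψ(θ)` on `E`
(and `w_θ(y|x) = 0` off `E`) realize `θ ↦ w_θ` as a bijection from `ℝ^d` onto
`W(X,E)`; i.e. `W(X,E)` is itself an exponential family of dimension `|E| − |X|`. -/
theorem markovKernels_is_exponential_family
    {X : Type*} [Fintype X] [DecidableEq X] (hX : 2 ≤ Fintype.card X)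
    (E : Finset (X × X)) (hconn : StronglyConnected E) :
    ∃ (C : X → X → ℝ) (F : Fin (E.card - Fintype.card X) → X → X → ℝ)
      (K : (Fin (E.card - Fintype.card X) → ℝ) → X → ℝ)
      (ψ : (Fin (E.card - Fintype.card X) → ℝ) → ℝ)
      (w : (Fin (E.card - Fintype.card X) → ℝ) → X → X → ℝ),
      (∀ θ x y, (x, y) ∈ E →
        Real.log (w θ x y) = C x y + ∑ i, θ i * F i x y + K θ y - K θ x - ψ θ) ∧
      (∀ θ x y, (x, y) ∉ E → w θ x y = 0) ∧
      Function.Injective w ∧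
      Set.range w = {v : X → X → ℝ | IsMarkovKernel E v} := by
  classical
  have hne : Nonempty X := Fintype.card_pos_iff.mp (by omega)
  set S := LinearMap.range (T (X := X) E) with hS
  have hone : (((fun _ => (1:ℝ)) : X → ℝ), (0:ℝ)) ≠ (0 : (X → ℝ) × ℝ) := by
    intro h
    have := congrFun (congrArg Prod.fst h) (Classical.arbitrary X)
    simp at this
  have hkrank : Module.finrank ℝ (LinearMap.ker (T (X := X) E)) = 1 := by
    rw [ker_T hconn]; exact finrank_span_singleton hone
  have hdom : Module.finrank ℝ ((X → ℝ) × ℝ) = Fintype.card X + 1 := by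
    rw [Module.finrank_prod, Module.finrank_pi, Module.finrank_self]
  have hSrank : Module.finrank ℝ S = Fintype.card X := by
    have h1 := LinearMap.finrank_range_add_finrank_ker (T (X := X) E)
    rw [← hS, hkrank, hdom] at h1
    omega
  obtain ⟨L, hcompl⟩ := Submodule.exists_isCompl S
  have hVrank : Module.finrank ℝ ({e : X × X // e ∈ E} → ℝ) = E.card := by
    rw [Module.finrank_pi]
    exact Fintype.card_coe E
  have hLrank : Module.finrank ℝ L = E.card - Fintype.card X := by
    have h1 := Submodule.finrank_add_eq_of_isCompl hcompl
    rw [hSrank, hVrank] at h1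
    omega
  let b : Module.Basis (Fin (E.card - Fintype.card X)) ℝ L := Module.finBasisOfFinrankEq ℝ L hLrank
  set Gmap : (Fin (E.card - Fintype.card X) → ℝ) → ({e : X × X // e ∈ E} → ℝ) :=
    fun θ => ∑ i, θ i • ((b i : L) : {e : X × X // e ∈ E} → ℝ) with hGmap
  have hGmem : ∀ θ, Gmap θ ∈ L := fun θ =>
    Submodule.sum_mem _ fun i _ => Submodule.smul_mem _ _ (SetLike.coe_mem _)
  have hGcoe : ∀ θ, ((∑ i, θ i • b i : L) : {e : X × X // e ∈ E} → ℝ) = Gmap θ := by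
    intro θ
    rw [show ((∑ i, θ i • b i : L) : {e : X × X // e ∈ E} → ℝ)
        = L.subtype (∑ i, θ i • b i) from rfl, map_sum]
    simp [hGmap]
  set F : Fin (E.card - Fintype.card X) → X → X → ℝ :=
    fun i x y => if h : (x, y) ∈ E then ((b i : L) : {e : X × X // e ∈ E} → ℝ) ⟨(x, y), h⟩ else 0
    with hF
  have hFsum : ∀ θ x y (h : (x, y) ∈ E), ∑ i, θ i * F i x y = Gmap θ ⟨(x, y), h⟩ := by
    intro θ x y h
    show _ = (∑ i, θ i • ((b i : L) : {e : X × X // e ∈ E} → ℝ)) ⟨(x, y), h⟩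
    rw [Finset.sum_apply]
    exact Finset.sum_congr rfl fun i _ => by simp [hF, h]
  set HF : (Fin (E.card - Fintype.card X) → ℝ) → X → X → ℝ :=
    fun θ x y => if h : (x, y) ∈ E then Gmap θ ⟨(x, y), h⟩ else 0 with hHF
  choose w K ψ hker hlog using fun θ => exists_kernel (E := E) hconn (HF θ)
  refine ⟨fun _ _ => 0, F, K, ψ, w, ?_, ?_, ?_, ?_⟩
  · intro θ x y h
    rw [hlog θ x y h, Real.log_exp]
    simp only [hHF, dif_pos h]
    rw [← hFsum θ x y h]
    ring
  · intro θ x y h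
    exact markov_off (hker θ) h
  · intro θ θ' hww
    set p : (X → ℝ) × ℝ := ((fun x => K θ' x - K θ x), ψ θ' - ψ θ) with hp
    have hD : Gmap θ - Gmap θ' = T E p := by
      funext e
      obtain ⟨⟨x, y⟩, he⟩ := e
      have h1 : w θ x y = w θ' x y := congrFun (congrFun hww x) y
      rw [hlog θ x y he, hlog θ' x y he] at h1
      have h2 := Real.exp_injective h1
      simp only [hHF, dif_pos he] at h2
      rw [Pi.sub_apply, T_apply]
      simp only [hp]
      linarith
    have hDS : Gmap θ - Gmap θ' ∈ S := by rw [hD]; exact ⟨p, rfl⟩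
    have hDL : Gmap θ - Gmap θ' ∈ L := Submodule.sub_mem _ (hGmem θ) (hGmem θ')
    have hD0 : Gmap θ - Gmap θ' = 0 :=
      Submodule.disjoint_def.mp hcompl.disjoint _ hDS hDL
    have hsum : (∑ i, (θ i - θ' i) • b i : L) = 0 := by
      have h3 : ((∑ i, (θ i - θ' i) • b i : L) : {e : X × X // e ∈ E} → ℝ) = 0 := by
      -- push coercion
        rw [show ((∑ i, (θ i - θ' i) • b i : L) : {e : X × X // e ∈ E} → ℝ)
            = L.subtype (∑ i, (θ i - θ' i) • b i) from rfl, map_sum]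
        have h4 : ∀ i : Fin (E.card - Fintype.card X),
            L.subtype ((θ i - θ' i) • b i)
              = θ i • ((b i : L) : {e : X × X // e ∈ E} → ℝ)
                - θ' i • ((b i : L) : {e : X × X // e ∈ E} → ℝ) := by
          intro i
          rw [map_smul, sub_smul]
          rfl
        rw [Finset.sum_congr rfl fun i _ => h4 i, Finset.sum_sub_distrib]
        exact hD0
      exact Subtype.ext h3
    have h5 := Fintype.linearIndependent_iff.mp b.linearIndependent
      (fun i => θ i - θ' i) hsum
    funext i
    have h6 : θ i - θ' i = 0 := h5 i
    linarith
  · ext v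
    constructor
    · rintro ⟨θ, rfl⟩
      exact hker θ
    · intro hv
      have hvM : IsMarkovKernel E v := hv
      set Lu : {e : X × X // e ∈ E} → ℝ := fun e => Real.log (v e.1.1 e.1.2) with hLu
      have hmem : Lu ∈ S ⊔ L := by
        rw [hcompl.codisjoint.eq_top]
        trivial
      obtain ⟨s, hsS, l, hlL, hsl⟩ := Submodule.mem_sup.mp hmem
      obtain ⟨p, hp⟩ := hsS
      set θ : Fin (E.card - Fintype.card X) → ℝ := fun i => b.repr ⟨l, hlL⟩ i with hθ
      have hGl : Gmap θ = l := by
        rw [← hGcoe]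
        have h6 : (∑ i, θ i • b i : L) = ⟨l, hlL⟩ := b.sum_repr ⟨l, hlL⟩
        rw [h6]
      refine ⟨θ, ?_⟩
      refine kernel_unique (E := E) hconn hvM (hker θ)
        (fun x => K θ x - p.1 x) (ψ θ - p.2) ?_
      intro x y h
      have hv0 : 0 < v x y := (hvM.2.2 x y).mpr h
      have hlogv : Real.log (v x y) = (p.1 y - p.1 x - p.2) + Gmap θ ⟨(x, y), h⟩ := by
        have h7 := congrFun hsl ⟨(x, y), h⟩
        rw [Pi.add_apply] at h7
        have h8 : s ⟨(x, y), h⟩ = p.1 y - p.1 x - p.2 := by rw [← hp, T_apply]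
        have h9 : l ⟨(x, y), h⟩ = Gmap θ ⟨(x, y), h⟩ := by rw [hGl]
        rw [h8, h9] at h7
        rw [hLu] at h7
        simpa using h7.symm
      rw [hlog θ x y h]
      rw [← Real.exp_log hv0, ← Real.exp_add]
      congr 1
      simp only [hHF, dif_pos h]
      rw [hlogv]
      ring
end

section
/- Let w_0, w_1 ∈ W(X,E). For each t ∈ ℝ let w_t ∈ W(X,E) be the unique Markov kernel for which there exist Z_t > 0 and γ_t : X → (0,∞) with w_t(y|x) = (1/Z_t)(γ_t(y)/γ_t(x)) · w_1(y|x)^t · w_0(y|x)^{1−t} for all (x,y) ∈ E. Then {w_t : t ∈ ℝ} is a 1-dimensional exponential family of Markov kernels on (X,E) containing w_0 (at t = 0) and w_1 (at t = 1). -/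
open scoped BigOperators

/-- `M ⊆ W(X,E)` is a `d`-dimensional exponential family of Markov kernels:
there exist `C, F₁, …, F_d : X × X → ℝ`, `K : ℝ^d × X → ℝ` and `ψ : ℝ^d → ℝ`
such that, with `w_θ` defined by
`log w_θ(y|x) = C(x,y) + Σᵢ θⁱ Fᵢ(x,y) + K_θ(y) − K_θ(x) − ψ(θ)` on `E`
and `w_θ(y|x) = 0` off `E`, each `w_θ` lies in `W(X,E)` and `M = {w_θ : θ ∈ ℝ^d}`. -/
def IsExpFamily {X : Type*} [Fintype X] (E : Finset (X × X)) (d : ℕ)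
    (M : Set (X → X → ℝ)) : Prop :=
  ∃ (C : X → X → ℝ) (F : Fin d → X → X → ℝ) (K : (Fin d → ℝ) → X → ℝ)
    (ψ : (Fin d → ℝ) → ℝ) (w : (Fin d → ℝ) → X → X → ℝ),
    (∀ θ x y, (x, y) ∈ E →
      Real.log (w θ x y) = C x y + ∑ i, θ i * F i x y + K θ y - K θ x - ψ θ) ∧
    (∀ θ x y, (x, y) ∉ E → w θ x y = 0) ∧
    (∀ θ, IsMarkovKernel E (w θ)) ∧
    M = Set.range w

lemma gamma_const' {X : Type*} [Fintype X] [Nonempty X]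
    (E : Finset (X × X)) (hconn : StronglyConnected E)
    (w : X → X → ℝ) (hw : IsMarkovKernel E w)
    (Z : ℝ) (γ : X → ℝ) (hZ : 0 < Z) (hγ : ∀ x, 0 < γ x)
    (heig : ∀ x, ∑ y, w x y * γ y = Z * γ x) :
    Z = 1 ∧ ∀ x y, γ x = γ y := by
  obtain ⟨x₀, -, hx₀⟩ := Finset.exists_min_image Finset.univ γ
    ⟨Classical.arbitrary X, Finset.mem_univ _⟩
  obtain ⟨x₁, -, hx₁⟩ := Finset.exists_max_image Finset.univ γ
    ⟨Classical.arbitrary X, Finset.mem_univ _⟩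
  have hmin : ∀ y, γ x₀ ≤ γ y := fun y => hx₀ y (Finset.mem_univ y)
  have hmax : ∀ y, γ y ≤ γ x₁ := fun y => hx₁ y (Finset.mem_univ y)
  have hone : ∀ x, ∑ y, w x y * γ x = γ x := by
    intro x; rw [← Finset.sum_mul, hw.2.1 x, one_mul]
  have hZ1 : 1 ≤ Z := by
    have h2 : ∑ y, w x₀ y * γ x₀ ≤ ∑ y, w x₀ y * γ y :=
      Finset.sum_le_sum fun y _ => mul_le_mul_of_nonneg_left (hmin y) (hw.1 x₀ y)
    have := heig x₀
    have := hone x₀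
    nlinarith [hγ x₀]
  have hZ2 : Z ≤ 1 := by
    have h2 : ∑ y, w x₁ y * γ y ≤ ∑ y, w x₁ y * γ x₁ :=
      Finset.sum_le_sum fun y _ => mul_le_mul_of_nonneg_left (hmax y) (hw.1 x₁ y)
    have := heig x₁
    have := hone x₁
    nlinarith [hγ x₁]
  have hZe : Z = 1 := le_antisymm hZ2 hZ1
  subst hZe
  have hstep : ∀ a b : X, (a, b) ∈ E → γ a = γ x₀ → γ b = γ x₀ := by
    intro a b hab ha
    have hsum : ∑ y, w a y * (γ y - γ x₀) = 0 := by
      have h1 := heig a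
      rw [one_mul] at h1
      have h2 : ∑ y, w a y * γ x₀ = γ x₀ := by
        rw [← Finset.sum_mul, hw.2.1 a, one_mul]
      calc ∑ y, w a y * (γ y - γ x₀)
          = (∑ y, w a y * γ y) - ∑ y, w a y * γ x₀ := by
            rw [← Finset.sum_sub_distrib]
            exact Finset.sum_congr rfl fun y _ => by ring
        _ = 0 := by rw [h1, h2, ha]; ring
    have hterm := (Finset.sum_eq_zero_iff_of_nonneg (fun y (_ : y ∈ Finset.univ) =>
        mul_nonneg (hw.1 a y) (sub_nonneg.mpr (hmin y)))).mp hsum b (Finset.mem_univ b)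
    have hwab : 0 < w a b := (hw.2.2 a b).mpr hab
    rcases mul_eq_zero.mp hterm with h | h
    · exact absurd h (ne_of_gt hwab)
    · linarith
  have hall : ∀ y, γ y = γ x₀ := by
    intro y
    induction hconn x₀ y with
    | single h => exact hstep _ _ h rfl
    | tail _ h ih => exact hstep _ _ h ih
  exact ⟨rfl, fun x y => by rw [hall x, hall y]⟩

lemma kernel_eq' {X : Type*} [Fintype X] [Nonempty X]
    (E : Finset (X × X)) (hconn : StronglyConnected E)
    (w w' : X → X → ℝ) (hw : IsMarkovKernel E w) (hw' : IsMarkovKernel E w')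
    (Z : ℝ) (γ : X → ℝ) (hZ : 0 < Z) (hγ : ∀ x, 0 < γ x)
    (heq : ∀ x y, (x, y) ∈ E → w' x y = (1 / Z) * (γ y / γ x) * w x y) :
    w' = w := by
  have hzero : ∀ (v : X → X → ℝ), IsMarkovKernel E v → ∀ x y, (x, y) ∉ E → v x y = 0 :=
    fun v hv x y h => le_antisymm (not_lt.mp fun hp => h ((hv.2.2 x y).mp hp)) (hv.1 x y)
  have heq' : ∀ x y, w' x y = (1 / Z) * (γ y / γ x) * w x y := by
    intro x y
    by_cases h : (x, y) ∈ E
    · exact heq x y h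
    · rw [hzero _ hw' x y h, hzero _ hw x y h, mul_zero]
  have heig : ∀ x, ∑ y, w x y * γ y = Z * γ x := by
    intro x
    have h2 : ∑ y, (1 / Z) * (γ y / γ x) * w x y = 1 := by
      calc ∑ y, (1 / Z) * (γ y / γ x) * w x y
          = ∑ y, w' x y := Finset.sum_congr rfl fun y _ => (heq' x y).symm
        _ = 1 := hw'.2.1 x
    have h3 : ∑ y, w x y * γ y = (Z * γ x) * ∑ y, (1 / Z) * (γ y / γ x) * w x y := by
      rw [Finset.mul_sum]
      refine Finset.sum_congr rfl fun y _ => ?_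
      have hZ' : Z ≠ 0 := hZ.ne'
      have hγx : γ x ≠ 0 := (hγ x).ne'
      field_simp
    rw [h3, h2, mul_one]
  obtain ⟨hZ1, hγc⟩ := gamma_const' E hconn w hw Z γ hZ hγ heig
  funext x y
  rw [heq' x y, hZ1, hγc y x, div_self (hγ x).ne']
  norm_num

/-- Corollary 2, e-geodesics. Let `w₀, w₁ ∈ W(X,E)` and for each
`t ∈ ℝ` let `w_t ∈ W(X,E)` be the Markov kernel for which there exist `Z_t > 0` and
`γ_t : X → (0,∞)` with
`w_t(y|x) = (1/Z_t)(γ_t(y)/γ_t(x)) w₁(y|x)^t w₀(y|x)^{1−t}` on `E`.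
Then `{w_t : t ∈ ℝ}` is a 1-dimensional exponential family containing `w₀` (at
`t = 0`) and `w₁` (at `t = 1`). -/
theorem eGeodesic_is_one_dim_exponential_family
    {X : Type*} [Fintype X] [DecidableEq X] (hX : 2 ≤ Fintype.card X)
    (E : Finset (X × X)) (hconn : StronglyConnected E)
    (w₀ w₁ : X → X → ℝ) (hw₀ : IsMarkovKernel E w₀) (hw₁ : IsMarkovKernel E w₁)
    (wt : ℝ → X → X → ℝ)
    (hwt : ∀ t : ℝ, IsMarkovKernel E (wt t) ∧
      ∃ (Z : ℝ) (γ : X → ℝ), 0 < Z ∧ (∀ x, 0 < γ x) ∧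
        ∀ x y, (x, y) ∈ E →
          wt t x y = (1 / Z) * (γ y / γ x) * (w₁ x y) ^ t * (w₀ x y) ^ (1 - t)) :
    IsExpFamily E 1 (Set.range wt) ∧ wt 0 = w₀ ∧ wt 1 = w₁ := by
  have hne : Nonempty X := Fintype.card_pos_iff.mp (by omega)
  choose Z γ hZ hγ heq using fun t => (hwt t).2
  have hmk : ∀ t, IsMarkovKernel E (wt t) := fun t => (hwt t).1
  have hzero : ∀ (v : X → X → ℝ), IsMarkovKernel E v → ∀ x y, (x, y) ∉ E → v x y = 0 :=
    fun v hv x y h => le_antisymm (not_lt.mp fun hp => h ((hv.2.2 x y).mp hp)) (hv.1 x y)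
  refine ⟨⟨fun x y => Real.log (w₀ x y),
    fun _ x y => Real.log (w₁ x y) - Real.log (w₀ x y),
    fun θ x => Real.log (γ (θ 0) x), fun θ => Real.log (Z (θ 0)),
    fun θ => wt (θ 0), ?_, fun θ x y h => hzero _ (hmk _) x y h,
    fun θ => hmk _, ?_⟩, ?_, ?_⟩
  · intro θ x y hxy
    simp only [Fin.sum_univ_one]
    set t := θ 0 with ht
    have h0 : 0 < w₀ x y := (hw₀.2.2 x y).mpr hxy
    have h1 : 0 < w₁ x y := (hw₁.2.2 x y).mpr hxy
    have hZ' : (1 : ℝ) / Z t ≠ 0 := one_div_ne_zero (hZ t).ne'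
    have hγd : γ t y / γ t x ≠ 0 := div_ne_zero (hγ t y).ne' (hγ t x).ne'
    have hr1 : w₁ x y ^ t ≠ 0 := (Real.rpow_pos_of_pos h1 t).ne'
    have hr0 : w₀ x y ^ (1 - t) ≠ 0 := (Real.rpow_pos_of_pos h0 (1 - t)).ne'
    rw [heq t x y hxy,
      Real.log_mul (mul_ne_zero (mul_ne_zero hZ' hγd) hr1) hr0,
      Real.log_mul (mul_ne_zero hZ' hγd) hr1,
      Real.log_mul hZ' hγd,
      Real.log_div (hγ t y).ne' (hγ t x).ne',
      one_div, Real.log_inv,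
      Real.log_rpow h1, Real.log_rpow h0]
    ring
  · ext v
    constructor
    · rintro ⟨t, rfl⟩; exact ⟨fun _ => t, rfl⟩
    · rintro ⟨θ, rfl⟩; exact ⟨θ 0, rfl⟩
  · refine kernel_eq' E hconn w₀ (wt 0) hw₀ (hmk 0) (Z 0) (γ 0) (hZ 0) (hγ 0) ?_
    intro x y hxy
    rw [heq 0 x y hxy, Real.rpow_zero, mul_one, sub_zero, Real.rpow_one]
  · refine kernel_eq' E hconn w₁ (wt 1) hw₁ (hmk 1) (Z 1) (γ 1) (hZ 1) (hγ 1) ?_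
    intro x y hxy
    rw [heq 1 x y hxy, Real.rpow_one, sub_self, Real.rpow_zero, mul_one]
end

section
/- For f : X × X → ℝ let Δ(f) denote the unique w ∈ W(X,E) for which there exist Z > 0 and γ : X → (0,∞) with w(y|x) = (1/Z)(γ(y)/γ(x)) exp(f(x,y)) for all (x,y) ∈ E. Then: (i) Δ is surjective onto W(X,E); and (ii) for f_1, f_2 : X × X → ℝ one has Δ(f_1) = Δ(f_2) if and only if there exist κ : X → ℝ and c ∈ ℝ with f_1(x,y) − f_2(x,y) = κ(y) − κ(x) + c for all (x,y) ∈ E. -/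
open scoped BigOperators

lemma kernel_unique {X : Type*} [Fintype X] [Nonempty X]
    (E : Finset (X × X)) (hconn : StronglyConnected E)
    {w1 w2 : X → X → ℝ} (h1 : IsMarkovKernel E w1) (h2 : IsMarkovKernel E w2)
    {Z : ℝ} {γ : X → ℝ} (hZ : 0 < Z) (hγ : ∀ x, 0 < γ x)
    (hrel : ∀ x y, (x, y) ∈ E → w2 x y = (1 / Z) * (γ y / γ x) * w1 x y) :
    w2 = w1 := by
  have hz1 : ∀ x y, (x, y) ∉ E → w1 x y = 0 := fun x y h =>
    le_antisymm (not_lt.1 fun hp => h ((h1.2.2 x y).1 hp)) (h1.1 x y)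
  have hz2 : ∀ x y, (x, y) ∉ E → w2 x y = 0 := fun x y h =>
    le_antisymm (not_lt.1 fun hp => h ((h2.2.2 x y).1 hp)) (h2.1 x y)
  have heig : ∀ x, ∑ y, w1 x y * γ y = Z * γ x := by
    intro x
    have hs : ∑ y, w2 x y = ∑ y, 1 / Z * (γ y / γ x) * w1 x y :=
      Finset.sum_congr rfl fun y _ => by
        by_cases he : (x, y) ∈ E
        · exact hrel x y he
        · rw [hz1 x y he, hz2 x y he]; ring
    have h1x := h2.2.1 x
    rw [hs] at h1x
    have hrw : ∑ y, 1 / Z * (γ y / γ x) * w1 x y = (∑ y, w1 x y * γ y) / (Z * γ x) := by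
      rw [Finset.sum_div]
      exact Finset.sum_congr rfl fun y _ => by
        field_simp
    rw [hrw] at h1x
    have hZx : Z * γ x ≠ 0 := (mul_pos hZ (hγ x)).ne'
    field_simp at h1x
    rw [div_eq_iff (hγ x).ne'] at h1x
    linarith [h1x]
  obtain ⟨x0, -, hx0⟩ := Finset.exists_max_image (Finset.univ : Finset X) γ
    ⟨Classical.arbitrary X, Finset.mem_univ _⟩
  obtain ⟨x1, -, hx1⟩ := Finset.exists_min_image (Finset.univ : Finset X) γ
    ⟨Classical.arbitrary X, Finset.mem_univ _⟩
  have hZle : Z ≤ 1 := by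
    have h := heig x0
    have hle : ∑ y, w1 x0 y * γ y ≤ ∑ y, w1 x0 y * γ x0 :=
      Finset.sum_le_sum fun y _ => mul_le_mul_of_nonneg_left (hx0 y (Finset.mem_univ y)) (h1.1 x0 y)
    rw [← Finset.sum_mul, h1.2.1 x0, one_mul] at hle
    nlinarith [hγ x0]
  have hZge : 1 ≤ Z := by
    have h := heig x1
    have hle : ∑ y, w1 x1 y * γ x1 ≤ ∑ y, w1 x1 y * γ y :=
      Finset.sum_le_sum fun y _ => mul_le_mul_of_nonneg_left (hx1 y (Finset.mem_univ y)) (h1.1 x1 y)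
    rw [← Finset.sum_mul, h1.2.1 x1, one_mul] at hle
    nlinarith [hγ x1]
  have hZeq : Z = 1 := le_antisymm hZle hZge
  have hstep : ∀ a b, γ a = γ x0 → (a, b) ∈ E → γ b = γ x0 := by
    intro a b ha hab
    have h := heig a
    rw [hZeq, one_mul, ha] at h
    have hterms : ∀ y ∈ Finset.univ, 0 ≤ w1 a y * (γ x0 - γ y) := fun y _ =>
      mul_nonneg (h1.1 a y) (sub_nonneg.2 (hx0 y (Finset.mem_univ y)))
    have hsum0 : ∑ y, w1 a y * (γ x0 - γ y) = 0 := by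
      have hsplit : ∑ y, w1 a y * (γ x0 - γ y)
          = (∑ y, w1 a y) * γ x0 - ∑ y, w1 a y * γ y := by
        rw [Finset.sum_mul, ← Finset.sum_sub_distrib]
        exact Finset.sum_congr rfl fun y _ => by ring
      rw [hsplit, h1.2.1 a, h, one_mul, sub_self]
    have hzero := (Finset.sum_eq_zero_iff_of_nonneg hterms).1 hsum0 b (Finset.mem_univ b)
    have hpos : 0 < w1 a b := (h1.2.2 a b).2 hab
    rcases mul_eq_zero.1 hzero with h' | h'
    · exact absurd h' hpos.ne'
    · linarith
  have hconst : ∀ x, γ x = γ x0 := by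
    intro x
    have h := hconn x0 x
    induction h with
    | single hab => exact hstep _ _ rfl hab
    | tail _ hab ih => exact hstep _ _ ih hab
  funext x y
  by_cases he : (x, y) ∈ E
  · rw [hrel x y he, hconst x, hconst y, hZeq]
    have := (hγ x0).ne'
    field_simp
  · rw [hz1 x y he, hz2 x y he]

/-- Let `Δ` send each `f : X × X → ℝ` to the unique
`w ∈ W(X,E)` with `w(y|x) = (1/Z)(γ(y)/γ(x)) exp(f(x,y))` on `E` for some `Z > 0`
and positive `γ`.  Then (i) `Δ` is surjective onto `W(X,E)`, and (ii)
`Δ(f₁) = Δ(f₂)` iff `f₁ − f₂` is, on `E`, of the form `κ(y) − κ(x) + c`. -/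

theorem Delta_surjective_and_fibers
    {X : Type*} [Fintype X] [DecidableEq X] (hX : 2 ≤ Fintype.card X)
    (E : Finset (X × X)) (hconn : StronglyConnected E)
    (Δ : (X → X → ℝ) → (X → X → ℝ))
    (hΔ : ∀ f : X → X → ℝ, IsMarkovKernel E (Δ f) ∧
      ∃ (Z : ℝ) (γ : X → ℝ), 0 < Z ∧ (∀ x, 0 < γ x) ∧
        ∀ x y, (x, y) ∈ E →
          Δ f x y = (1 / Z) * (γ y / γ x) * Real.exp (f x y)) :
    (∀ w : X → X → ℝ, IsMarkovKernel E w → ∃ f, Δ f = w) ∧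
    (∀ f₁ f₂ : X → X → ℝ, Δ f₁ = Δ f₂ ↔
      ∃ (κ : X → ℝ) (c : ℝ), ∀ x y, (x, y) ∈ E →
        f₁ x y - f₂ x y = κ y - κ x + c) := by
  have : Nonempty X := Fintype.card_pos_iff.mp (by omega)
  constructor
  · intro w hw
    refine ⟨fun x y => Real.log (w x y), ?_⟩
    obtain ⟨hk, Z, γ, hZ, hγ, hform⟩ := hΔ fun x y => Real.log (w x y)
    refine kernel_unique E hconn hw hk hZ hγ ?_
    intro x y he
    rw [hform x y he, Real.exp_log ((hw.2.2 x y).2 he)]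
  · intro f₁ f₂
    obtain ⟨hk1, Z₁, γ₁, hZ₁, hγ₁, hf1⟩ := hΔ f₁
    obtain ⟨hk2, Z₂, γ₂, hZ₂, hγ₂, hf2⟩ := hΔ f₂
    constructor
    · intro heq
      refine ⟨fun x => Real.log (γ₂ x) - Real.log (γ₁ x), Real.log Z₁ - Real.log Z₂, ?_⟩
      intro x y he
      have h1 := hf1 x y he
      have h2 := hf2 x y he
      rw [heq] at h1
      have hc := h1.symm.trans h2
      have hexp : Real.exp (f₁ x y - f₂ x y)
          = Real.exp ((Real.log (γ₂ y) - Real.log (γ₁ y))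
              - (Real.log (γ₂ x) - Real.log (γ₁ x)) + (Real.log Z₁ - Real.log Z₂)) := by
        rw [Real.exp_add, Real.exp_sub, Real.exp_sub, Real.exp_sub, Real.exp_sub,
          Real.exp_sub, Real.exp_log (hγ₂ y), Real.exp_log (hγ₁ y),
          Real.exp_log (hγ₂ x), Real.exp_log (hγ₁ x), Real.exp_log hZ₁, Real.exp_log hZ₂]
        have e1 := (Real.exp_pos (f₁ x y)).ne'
        have e2 := (Real.exp_pos (f₂ x y)).ne'
        have g1x := (hγ₁ x).ne'
        have g1y := (hγ₁ y).ne'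
        have g2x := (hγ₂ x).ne'
        have g2y := (hγ₂ y).ne'
        have z1 := hZ₁.ne'
        have z2 := hZ₂.ne'
        field_simp at hc ⊢

        linear_combination hc
      exact Real.exp_injective hexp
    · rintro ⟨κ, c, hκ⟩
      refine kernel_unique (Z := Z₁ / (Z₂ * Real.exp c))
        (γ := fun x => γ₁ x * Real.exp (κ x) / γ₂ x) E hconn hk2 hk1
        (div_pos hZ₁ (mul_pos hZ₂ (Real.exp_pos c))) (fun x => div_pos (mul_pos (hγ₁ x) (Real.exp_pos (κ x))) (hγ₂ x)) ?_
      intro x y he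
      rw [hf1 x y he, hf2 x y he]
      have hfd : f₁ x y = f₂ x y + (κ y - κ x + c) := by linarith [hκ x y he]
      rw [hfd, Real.exp_add, Real.exp_add, Real.exp_sub]
      have e2 := (Real.exp_pos (f₂ x y)).ne'
      have eky := (Real.exp_pos (κ y)).ne'
      have ekx := (Real.exp_pos (κ x)).ne'
      have ec := (Real.exp_pos c).ne'
      have g1x := (hγ₁ x).ne'
      have g1y := (hγ₁ y).ne'
      have g2x := (hγ₂ x).ne'
      have g2y := (hγ₂ y).ne'
      have z1 := hZ₁.ne'
      have z2 := hZ₂.ne'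
      field_simp
end

section
/- A subset M ⊆ W(X,E) is an exponential family (of some dimension d ≥ 0) if and only if there exist a function f_0 : X × X → ℝ and a linear subspace L of the space of real functions on X × X such that M = { w ∈ W(X,E) : there exist g ∈ L, κ : X → ℝ, and c ∈ ℝ with log w(y|x) = f_0(x,y) + g(x,y) + κ(y) − κ(x) + c for all (x,y) ∈ E }. -/
open scoped BigOperators

section Aux

lemma exists_out_edge {X : Type*} {E : Finset (X × X)} (hconn : StronglyConnected E) (x : X) :
    ∃ y, (x, y) ∈ E := by
  have key : ∀ z, Relation.TransGen (fun a b => (a, b) ∈ E) x z → ∃ y, (x, y) ∈ E := by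
    intro z h
    induction h with
    | single h => exact ⟨_, h⟩
    | tail _ _ ih => exact ih
  exact key x (hconn x x)

lemma kernel_unique_s11 {X : Type*} [Fintype X] [Nonempty X] {E : Finset (X × X)}
    (hconn : StronglyConnected E) {w w' : X → X → ℝ}
    (hw : IsMarkovKernel E w) (hw' : IsMarkovKernel E w')
    (φ : X → ℝ) (a : ℝ)
    (h : ∀ x y, (x, y) ∈ E → Real.log (w x y) = Real.log (w' x y) + (φ y - φ x + a)) :
    w = w' := by
  set v : X → ℝ := fun x => Real.exp (φ x) with hv
  have hvpos : ∀ x, 0 < v x := fun x => Real.exp_pos _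
  set b : ℝ := Real.exp a with hb
  have hbpos : 0 < b := Real.exp_pos _
  have key : ∀ x y, w x y = w' x y * v y * b / v x := by
    intro x y
    by_cases hE : (x, y) ∈ E
    · have hw1 : 0 < w x y := (hw.2.2 x y).2 hE
      have hw2 : 0 < w' x y := (hw'.2.2 x y).2 hE
      have heq := h x y hE
      have : w x y = Real.exp (Real.log (w' x y) + (φ y - φ x + a)) := by
        rw [← heq, Real.exp_log hw1]
      rw [this, Real.exp_add, Real.exp_add, Real.exp_sub, Real.exp_log hw2]
      simp only [hv, hb]
      field_simp
    · have h1 : w x y = 0 :=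
        le_antisymm (not_lt.mp fun hp => hE ((hw.2.2 x y).1 hp)) (hw.1 x y)
      have h2 : w' x y = 0 :=
        le_antisymm (not_lt.mp fun hp => hE ((hw'.2.2 x y).1 hp)) (hw'.1 x y)
      rw [h1, h2]; ring
  have hsum : ∀ x, (∑ y, w' x y * v y) * b = v x := by
    intro x
    have h1 : ∑ y, w x y = (∑ y, w' x y * v y) * b / v x := by
      rw [Finset.sum_mul, Finset.sum_div]
      exact Finset.sum_congr rfl fun y _ => by rw [key x y]
    have h2 : (∑ y, w' x y * v y) * b / v x = 1 := by rw [← h1, hw.2.1 x]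
    have := (div_eq_one_iff_eq (ne_of_gt (hvpos x))).mp h2
    linarith
  -- b = 1
  obtain ⟨x₁, -, hx₁⟩ := Finset.exists_max_image Finset.univ v Finset.univ_nonempty
  obtain ⟨x₀, -, hx₀⟩ := Finset.exists_min_image Finset.univ v Finset.univ_nonempty
  have hle1 : ∀ x, (∑ y, w' x y * v y) ≤ v x₁ := by
    intro x
    calc ∑ y, w' x y * v y ≤ ∑ y, w' x y * v x₁ :=
          Finset.sum_le_sum fun y _ => mul_le_mul_of_nonneg_left (hx₁ y (Finset.mem_univ y)) (hw'.1 x y)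
    _ = v x₁ := by rw [← Finset.sum_mul, hw'.2.1 x, one_mul]
  have hge0 : ∀ x, v x₀ ≤ ∑ y, w' x y * v y := by
    intro x
    calc v x₀ = ∑ y, w' x y * v x₀ := by rw [← Finset.sum_mul, hw'.2.1 x, one_mul]
    _ ≤ ∑ y, w' x y * v y :=
          Finset.sum_le_sum fun y _ => mul_le_mul_of_nonneg_left (hx₀ y (Finset.mem_univ y)) (hw'.1 x y)
  have hb1 : b = 1 := by
    have h1 : v x₁ ≤ v x₁ * b := by
      calc v x₁ = (∑ y, w' x₁ y * v y) * b := (hsum x₁).symm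
      _ ≤ v x₁ * b := mul_le_mul_of_nonneg_right (hle1 x₁) hbpos.le
    have h2 : v x₀ * b ≤ v x₀ := by
      calc v x₀ * b ≤ (∑ y, w' x₀ y * v y) * b := mul_le_mul_of_nonneg_right (hge0 x₀) hbpos.le
      _ = v x₀ := hsum x₀
    have hb1' : 1 ≤ b := by
      have := hvpos x₁; nlinarith
    have hb2' : b ≤ 1 := by
      have := hvpos x₀; nlinarith
    linarith
  have hsum' : ∀ x, ∑ y, w' x y * v y = v x := by
    intro x; have := hsum x; rw [hb1, mul_one] at this; exact this
  -- constancy of v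
  have step : ∀ u, v u = v x₁ → ∀ y, (u, y) ∈ E → v y = v x₁ := by
    intro u hu y hEy
    have h0 : ∑ z, w' u z * (v x₁ - v z) = 0 := by
      have : ∑ z, w' u z * (v x₁ - v z) = (∑ z, w' u z) * v x₁ - ∑ z, w' u z * v z := by
        rw [Finset.sum_mul]
        rw [← Finset.sum_sub_distrib]
        exact Finset.sum_congr rfl fun z _ => by ring
      rw [this, hw'.2.1 u, one_mul, hsum' u, hu, sub_self]
    have hnn : ∀ z ∈ Finset.univ, 0 ≤ w' u z * (v x₁ - v z) := fun z _ =>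
      mul_nonneg (hw'.1 u z) (sub_nonneg.mpr (hx₁ z (Finset.mem_univ z)))
    have hall := (Finset.sum_eq_zero_iff_of_nonneg hnn).mp h0 y (Finset.mem_univ y)
    have hwpos : 0 < w' u y := (hw'.2.2 u y).2 hEy
    have : v x₁ - v y = 0 := by
      rcases mul_eq_zero.mp hall with h | h
      · exact absurd h (ne_of_gt hwpos)
      · exact h
    linarith
  have hconst : ∀ z, v z = v x₁ := by
    intro z
    have key2 : ∀ z', Relation.TransGen (fun a b => (a, b) ∈ E) x₁ z' → v z' = v x₁ := by
      intro z' hz'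
      induction hz' with
      | single h => exact step x₁ rfl _ h
      | tail _ h ih => exact step _ ih _ h
    exact key2 z (hconn x₁ z)
  funext x y
  rw [key x y, hb1, hconst x, hconst y, mul_one]
  exact mul_div_cancel_right₀ _ (ne_of_gt (hvpos x₁))

lemma pf_exists {X : Type*} [Fintype X] [Nonempty X] [DecidableEq X] {E : Finset (X × X)}
    (hconn : StronglyConnected E) (A : Matrix X X ℝ)
    (hApos : ∀ x y, (x, y) ∈ E → 0 < A x y)
    (hA0 : ∀ x y, (x, y) ∉ E → A x y = 0) :
    ∃ (v : X → ℝ) (lam : ℝ), (∀ x, 0 < v x) ∧ 0 < lam ∧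
      ∀ x, ∑ y, A x y * v y = lam * v x := by
  classical
  have hAnn : ∀ x y, 0 ≤ A x y := by
    intro x y
    by_cases hE : (x, y) ∈ E
    · exact (hApos x y hE).le
    · exact (hA0 x y hE).ge
  -- entries of powers of A and A+1 are nonnegative
  have hB : ∀ x y, 0 ≤ (A + 1) x y := by
    intro x y
    simp only [Matrix.add_apply, Matrix.one_apply]
    by_cases h : x = y
    · simp [h]; linarith [hAnn y y]
    · simp [h, hAnn x y]
  have pownn : ∀ (B : Matrix X X ℝ), (∀ x y, 0 ≤ B x y) → ∀ k x y, 0 ≤ (B ^ k) x y := by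
    intro B hBnn k
    induction k with
    | zero => intro x y; simp [Matrix.one_apply]; by_cases h : x = y <;> simp [h]
    | succ n ih =>
        intro x y
        rw [pow_succ, Matrix.mul_apply]
        exact Finset.sum_nonneg fun z _ => mul_nonneg (ih x z) (hBnn z y)
  -- reachability gives positivity of some power
  have reach : ∀ x y : X, ∃ m, 0 < (A ^ m) x y := by
    intro x y
    have key : ∀ z, Relation.TransGen (fun a b => (a, b) ∈ E) x z → ∃ m, 0 < (A ^ m) x z := by
      intro z h
      induction h with
      | single h => exact ⟨1, by simpa [pow_one] using hApos _ _ h⟩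
      | tail hp h ih =>
          obtain ⟨m, hm⟩ := ih
          refine ⟨m + 1, ?_⟩
          rw [pow_succ, Matrix.mul_apply]
          refine Finset.sum_pos' (fun z _ => mul_nonneg (pownn A hAnn m x z) (hAnn _ _)) ?_
          exact ⟨_, Finset.mem_univ _, mul_pos hm (hApos _ _ h)⟩
    exact key y (hconn x y)
  -- entrywise monotonicity lemmas
  have mono2 : ∀ n x y, (A ^ n) x y ≤ ((A + 1) ^ n) x y := by
    intro n
    induction n with
    | zero => intro x y; simp
    | succ n ih =>
        intro x y
        rw [pow_succ, pow_succ, Matrix.mul_apply, Matrix.mul_apply]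
        refine Finset.sum_le_sum fun z _ => ?_
        calc (A ^ n) x z * A z y ≤ (((A + 1) ^ n : Matrix X X ℝ)) x z * A z y :=
              mul_le_mul_of_nonneg_right (ih x z) (hAnn z y)
        _ ≤ (((A + 1) ^ n : Matrix X X ℝ)) x z * (A + 1) z y := by
              refine mul_le_mul_of_nonneg_left ?_ (pownn _ hB n x z)
              simp only [Matrix.add_apply, Matrix.one_apply]
              by_cases h : z = y <;> simp [h]
  have mono1 : ∀ (n : ℕ) (x y : X), (((A + 1) ^ n : Matrix X X ℝ)) x y ≤ ((A + 1) ^ (n + 1)) x y := by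
    intro n x y
    have : (A + 1) ^ (n + 1) = (A + 1) ^ n * A + (A + 1) ^ n := by
      rw [pow_succ, mul_add, mul_one]
    rw [this, Matrix.add_apply, Matrix.mul_apply]
    have : 0 ≤ ∑ z, ((A + 1) ^ n) x z * A z y :=
      Finset.sum_nonneg fun z _ => mul_nonneg (pownn _ hB n x z) (hAnn z y)
    linarith
  have mono1' : ∀ k n, k ≤ n → ∀ x y : X, (((A + 1) ^ k : Matrix X X ℝ)) x y ≤ (((A + 1) ^ n : Matrix X X ℝ)) x y := by
    intro k n hkn
    induction n, hkn using Nat.le_induction with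
    | base => intro x y; exact le_rfl
    | succ n hkn ih => intro x y; exact le_trans (ih x y) (mono1 n x y)
  -- uniform power with all entries positive
  set m : X × X → ℕ := fun p => (reach p.1 p.2).choose with hm
  set N : ℕ := Finset.univ.sup m with hN
  set P : Matrix X X ℝ := (A + 1) ^ N with hP
  have hPpos : ∀ x y, 0 < P x y := by
    intro x y
    have h1 : 0 < (A ^ (m (x, y))) x y := (reach x y).choose_spec
    have h2 : m (x, y) ≤ N := Finset.le_sup (Finset.mem_univ (x, y))
    calc (0:ℝ) < (A ^ (m (x, y))) x y := h1
    _ ≤ ((A + 1) ^ (m (x, y))) x y := mono2 _ x y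
    _ ≤ ((A + 1) ^ N) x y := mono1' _ _ h2 x y
  have hPnn : ∀ x y, 0 ≤ P x y := fun x y => (hPpos x y).le
  -- the compact simplex and its image
  set S : Set (X → ℝ) := {u | (∀ x, 0 ≤ u x) ∧ ∑ x, u x = 1} with hS
  have hScomp : IsCompact S := by
    have hsub : S ⊆ Set.Icc 0 1 := by
      rintro u ⟨h1, h2⟩
      constructor
      · intro x; exact h1 x
      · intro x
        calc u x ≤ ∑ y, u y := Finset.single_le_sum (fun y _ => h1 y) (Finset.mem_univ x)
        _ = 1 := h2
    have hclosed : IsClosed S := by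
      have h1 : IsClosed {u : X → ℝ | ∀ x, 0 ≤ u x} := by
        have : {u : X → ℝ | ∀ x, 0 ≤ u x} = ⋂ x, {u : X → ℝ | 0 ≤ u x} := by
          ext u; simp [Set.mem_iInter]
        rw [this]
        exact isClosed_iInter fun x => isClosed_le continuous_const (continuous_apply x)
      have h2 : IsClosed {u : X → ℝ | ∑ x, u x = 1} :=
        isClosed_eq (continuous_finset_sum _ fun x _ => continuous_apply x) continuous_const
      exact h1.inter h2
    exact IsCompact.of_isClosed_subset isCompact_Icc hclosed hsub
  have hSne : S.Nonempty := by
    refine ⟨fun _ => (Fintype.card X : ℝ)⁻¹, fun x => by positivity, ?_⟩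
    have hc : 0 < (Fintype.card X : ℝ) := by
      have := Fintype.card_pos (α := X); positivity
    rw [Finset.sum_const, Finset.card_univ, nsmul_eq_mul, mul_inv_cancel₀ (ne_of_gt hc)]
  have hTcont : Continuous fun u : X → ℝ => P.mulVec u := by
    refine continuous_pi fun x => ?_
    simp only [Matrix.mulVec, dotProduct]
    exact continuous_finset_sum _ fun y _ => continuous_const.mul (continuous_apply y)
  set Kc : Set (X → ℝ) := (fun u => P.mulVec u) '' S with hKc
  have hKcomp : IsCompact Kc := hScomp.image hTcont
  have hKne : Kc.Nonempty := hSne.image _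
  have hKpos : ∀ v ∈ Kc, ∀ x, 0 < v x := by
    rintro v ⟨u, ⟨hu1, hu2⟩, rfl⟩ x
    have : ∃ y, 0 < u y := by
      by_contra hcon
      push_neg at hcon
      have : ∑ y, u y = 0 :=
        Finset.sum_eq_zero fun y _ => le_antisymm (hcon y) (hu1 y)
      rw [hu2] at this; norm_num at this
    obtain ⟨y₀, hy₀⟩ := this
    have : (0:ℝ) < ∑ y, P x y * u y :=
      Finset.sum_pos' (fun y _ => mul_nonneg (hPnn x y) (hu1 y))
        ⟨y₀, Finset.mem_univ _, mul_pos (hPpos x y₀) hy₀⟩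
    simpa [Matrix.mulVec, dotProduct] using this
  -- the Collatz-Wielandt function
  set f : (X → ℝ) → ℝ := fun v => Finset.univ.inf' Finset.univ_nonempty
      (fun x => A.mulVec v x / v x) with hf
  have hfcont : ContinuousOn f Kc := by
    refine ContinuousOn.finset_inf'_apply Finset.univ_nonempty fun x _ => ?_
    refine ContinuousOn.div ?_ (continuous_apply x).continuousOn
      (fun v hv => ne_of_gt (hKpos v hv x))
    refine Continuous.continuousOn ?_
    simp only [Matrix.mulVec, dotProduct]
    exact continuous_finset_sum _ fun y _ => continuous_const.mul (continuous_apply y)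
  obtain ⟨vs, hvsK, hmax⟩ := hKcomp.exists_isMaxOn hKne hfcont
  have hvspos : ∀ x, 0 < vs x := hKpos vs hvsK
  set r : ℝ := f vs with hr
  have hmul : ∀ (v : X → ℝ) x, A.mulVec v x = ∑ y, A x y * v y := by
    intro v x; simp [Matrix.mulVec, dotProduct]
  have hr_le : ∀ x, r * vs x ≤ A.mulVec vs x := by
    intro x
    have h1 : r ≤ A.mulVec vs x / vs x := Finset.inf'_le _ (Finset.mem_univ x)
    calc r * vs x ≤ (A.mulVec vs x / vs x) * vs x :=
          mul_le_mul_of_nonneg_right h1 (hvspos x).le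
    _ = A.mulVec vs x := div_mul_cancel₀ _ (ne_of_gt (hvspos x))
  have hrpos : 0 < r := by
    rw [hr, hf]
    refine Finset.lt_inf'_iff _ |>.mpr fun x _ => ?_
    obtain ⟨y₀, hy₀⟩ := exists_out_edge hconn x
    refine div_pos ?_ (hvspos x)
    rw [hmul]
    exact Finset.sum_pos' (fun y _ => mul_nonneg (hAnn x y) (hvspos y).le)
      ⟨y₀, Finset.mem_univ _, mul_pos (hApos _ _ hy₀) (hvspos y₀)⟩
  by_cases heq : ∀ x, A.mulVec vs x = r * vs x
  · exact ⟨vs, r, hvspos, hrpos, fun x => by rw [← hmul, heq x]⟩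
  -- otherwise derive a contradiction
  exfalso
  push_neg at heq
  obtain ⟨x₀, hx₀⟩ := heq
  set u : X → ℝ := A.mulVec vs - r • vs with hu
  have hunn : ∀ x, 0 ≤ u x := by
    intro x
    simp only [hu, Pi.sub_apply, Pi.smul_apply, smul_eq_mul, sub_nonneg]
    exact hr_le x
  have hux₀ : 0 < u x₀ := by
    have h1 := hr_le x₀
    have : r * vs x₀ < A.mulVec vs x₀ := lt_of_le_of_ne h1 (Ne.symm hx₀)
    simp only [hu, Pi.sub_apply, Pi.smul_apply, smul_eq_mul, sub_pos]
    exact this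
  have hPu : ∀ x, 0 < P.mulVec u x := by
    intro x
    rw [show P.mulVec u x = ∑ y, P x y * u y from by simp [Matrix.mulVec, dotProduct]]
    exact Finset.sum_pos' (fun y _ => mul_nonneg (hPnn x y) (hunn y))
      ⟨x₀, Finset.mem_univ _, mul_pos (hPpos x x₀) hux₀⟩
  set w0 : X → ℝ := P.mulVec vs with hw0
  have hw0pos : ∀ x, 0 < w0 x := by
    intro x
    rw [show w0 x = ∑ y, P x y * vs y from by simp [hw0, Matrix.mulVec, dotProduct]]
    exact Finset.sum_pos (fun y _ => mul_pos (hPpos x y) (hvspos y)) Finset.univ_nonempty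
  have hcomm : A * P = P * A :=
    ((Commute.add_right (Commute.refl A) (Commute.one_right A)).pow_right N).eq
  have hAw0 : A.mulVec w0 = P.mulVec (A.mulVec vs) := by
    rw [hw0, Matrix.mulVec_mulVec, Matrix.mulVec_mulVec, hcomm]
  have hkey : ∀ x, r * w0 x < A.mulVec w0 x := by
    intro x
    have h2 : P.mulVec u x = A.mulVec w0 x - r * w0 x := by
      rw [hu, Matrix.mulVec_sub, Matrix.mulVec_smul, hAw0]
      simp [Pi.sub_apply, Pi.smul_apply, smul_eq_mul, hw0]
    have := hPu x
    rw [h2] at this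
    linarith
  set c : ℝ := ∑ x, vs x with hc
  have hcpos : 0 < c :=
    Finset.sum_pos (fun x _ => hvspos x) Finset.univ_nonempty
  have hu'S : (c⁻¹ • vs) ∈ S := by
    constructor
    · intro x
      simp only [Pi.smul_apply, smul_eq_mul]
      exact mul_nonneg (inv_nonneg.mpr hcpos.le) (hvspos x).le
    · simp only [Pi.smul_apply, smul_eq_mul, ← Finset.mul_sum, ← hc]
      exact inv_mul_cancel₀ (ne_of_gt hcpos)
  have hw1K : P.mulVec (c⁻¹ • vs) ∈ Kc := ⟨c⁻¹ • vs, hu'S, rfl⟩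
  have hw1 : P.mulVec (c⁻¹ • vs) = c⁻¹ • w0 := by
    rw [Matrix.mulVec_smul, hw0]
  have hfw1 : r < f (P.mulVec (c⁻¹ • vs)) := by
    rw [hf]
    refine Finset.lt_inf'_iff _ |>.mpr fun x _ => ?_
    rw [hw1, Matrix.mulVec_smul]
    simp only [Pi.smul_apply, smul_eq_mul]
    rw [mul_div_mul_left _ _ (inv_ne_zero (ne_of_gt hcpos))]
    exact (lt_div_iff₀ (hw0pos x)).mpr (by linarith [hkey x])
  have := hmax hw1K
  simp only [Set.mem_setOf_eq] at this
  have : f (P.mulVec (c⁻¹ • vs)) ≤ r := this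
  linarith

end Aux

/-- Theorem 2. A subset `M ⊆ W(X,E)` is an exponential family
(of some dimension `d`) iff there exist a function `f₀ : X × X → ℝ` and a linear
subspace `L` of the space of real functions on `X × X` such that `M` consists of
exactly those kernels `w ∈ W(X,E)` whose logarithm is, on `E`, of the form
`f₀(x,y) + g(x,y) + κ(y) − κ(x) + c` with `g ∈ L`, `κ : X → ℝ`, `c ∈ ℝ`. -/

theorem expFamily_iff_affine_subspace
    {X : Type*} [Fintype X] [DecidableEq X] (hX : 2 ≤ Fintype.card X)
    (E : Finset (X × X)) (hconn : StronglyConnected E)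
    (M : Set (X → X → ℝ)) :
    (∃ d : ℕ, IsExpFamily E d M) ↔
      ∃ (f₀ : X → X → ℝ) (L : Submodule ℝ (X → X → ℝ)),
        M = {w : X → X → ℝ | IsMarkovKernel E w ∧
          ∃ g ∈ L, ∃ (κ : X → ℝ) (c : ℝ), ∀ x y, (x, y) ∈ E →
            Real.log (w x y) = f₀ x y + g x y + κ y - κ x + c} := by
  have hne : Nonempty X := Fintype.card_pos_iff.mp (by omega)
  constructor
  · rintro ⟨d, C, F, K, ψ, w, hlog, hzero, hMK, hM⟩
    refine ⟨C, Submodule.span ℝ (Set.range F), ?_⟩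
    rw [hM]
    ext w'
    simp only [Set.mem_setOf_eq]
    constructor
    · rintro ⟨θ, rfl⟩
      refine ⟨hMK θ, fun x y => ∑ i, θ i * F i x y, ?_, K θ, -ψ θ, ?_⟩
      · have hgeq : (fun x y => ∑ i, θ i * F i x y) = ∑ i, θ i • F i := by
          funext x y
          simp [Finset.sum_apply, Pi.smul_apply, smul_eq_mul]
        rw [hgeq]
        exact Submodule.sum_mem _ fun i _ =>
          Submodule.smul_mem _ _ (Submodule.subset_span ⟨i, rfl⟩)
      · intro x y hE
        rw [hlog θ x y hE]; ring
    · rintro ⟨hw'MK, g, hgL, κ, c, hform⟩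
      obtain ⟨θ, hθ⟩ := (Submodule.mem_span_range_iff_exists_fun ℝ).mp hgL
      have hg : ∀ x y, g x y = ∑ i, θ i * F i x y := by
        intro x y; rw [← hθ]; simp [Finset.sum_apply, Pi.smul_apply, smul_eq_mul]
      refine ⟨θ, (kernel_unique_s11 hconn hw'MK (hMK θ)
        (fun x => κ x - K θ x) (c + ψ θ) ?_).symm⟩
      intro x y hE
      rw [hform x y hE, hlog θ x y hE, hg x y]; ring
  · rintro ⟨f₀, L, hM⟩
    set d := Module.finrank ℝ L with hd
    set b := Module.finBasis ℝ L with hb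
    set F : Fin d → X → X → ℝ := fun i => (b i : X → X → ℝ) with hF
    have hFspan : Submodule.span ℝ (Set.range F) = L := by
      have h1 : Set.range F = L.subtype '' Set.range b := by
        rw [← Set.range_comp]; rfl
      rw [h1, ← Submodule.map_span, b.span_eq, Submodule.map_top, Submodule.range_subtype]
    set Aθ : (Fin d → ℝ) → Matrix X X ℝ := fun θ => Matrix.of fun x y =>
      if (x, y) ∈ E then Real.exp (f₀ x y + ∑ i, θ i * F i x y) else 0 with hAθ
    have hApos : ∀ θ x y, (x, y) ∈ E → 0 < Aθ θ x y := fun θ x y hE => by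
      simp only [hAθ, Matrix.of_apply, if_pos hE]
      exact Real.exp_pos _
    have hA0 : ∀ θ x y, (x, y) ∉ E → Aθ θ x y = 0 := fun θ x y hE => by
      simp only [hAθ, Matrix.of_apply, if_neg hE]
    have hAnn : ∀ θ x y, 0 ≤ Aθ θ x y := by
      intro θ x y
      by_cases hE : (x, y) ∈ E
      · exact (hApos θ x y hE).le
      · exact (hA0 θ x y hE).ge
    choose v lam hv hlam heig using fun θ => pf_exists hconn (Aθ θ) (hApos θ) (hA0 θ)
    set w : (Fin d → ℝ) → X → X → ℝ :=
      fun θ x y => Aθ θ x y * v θ y / (lam θ * v θ x) with hw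
    have hzero : ∀ θ x y, (x, y) ∉ E → w θ x y = 0 := by
      intro θ x y hE; simp [hw, hA0 θ x y hE]
    have hlogw : ∀ θ x y, (x, y) ∈ E →
        Real.log (w θ x y) = f₀ x y + ∑ i, θ i * F i x y
          + Real.log (v θ y) - Real.log (v θ x) - Real.log (lam θ) := by
      intro θ x y hE
      have hA : Aθ θ x y = Real.exp (f₀ x y + ∑ i, θ i * F i x y) := by
        simp only [hAθ, Matrix.of_apply, if_pos hE]
      have h1 : (0:ℝ) < v θ y := hv θ y
      have h2 : (0:ℝ) < v θ x := hv θ x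
      have h3 : (0:ℝ) < lam θ := hlam θ
      rw [hw]
      simp only
      rw [hA, Real.log_div (by positivity) (by positivity),
        Real.log_mul (Real.exp_ne_zero _) (ne_of_gt h1),
        Real.log_mul (ne_of_gt h3) (ne_of_gt h2), Real.log_exp]
      ring
    have hMKw : ∀ θ, IsMarkovKernel E (w θ) := by
      intro θ
      refine ⟨fun x y => ?_, fun x => ?_, fun x y => ?_⟩
      · exact div_nonneg (mul_nonneg (hAnn θ x y) (hv θ y).le)
          (mul_nonneg (hlam θ).le (hv θ x).le)
      · rw [show (∑ y, w θ x y) = (∑ y, Aθ θ x y * v θ y) / (lam θ * v θ x) from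
          (Finset.sum_div _ _ _).symm]
        rw [heig θ x]
        exact div_self (ne_of_gt (mul_pos (hlam θ) (hv θ x)))
      · constructor
        · intro hp
          by_contra hE
          rw [hzero θ x y hE] at hp
          exact lt_irrefl _ hp
        · intro hE
          exact div_pos (mul_pos (hApos θ x y hE) (hv θ y))
            (mul_pos (hlam θ) (hv θ x))
    refine ⟨d, f₀, F, fun θ x => Real.log (v θ x), fun θ => Real.log (lam θ), w,
      hlogw, hzero, hMKw, ?_⟩
    rw [hM]
    ext w'
    simp only [Set.mem_setOf_eq]
    constructor
    · rintro ⟨hw'MK, g, hgL, κ, c, hform⟩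
      rw [← hFspan] at hgL
      obtain ⟨θ, hθ⟩ := (Submodule.mem_span_range_iff_exists_fun ℝ).mp hgL
      have hg : ∀ x y, g x y = ∑ i, θ i * F i x y := by
        intro x y; rw [← hθ]; simp [Finset.sum_apply, Pi.smul_apply, smul_eq_mul]
      refine ⟨θ, (kernel_unique_s11 hconn hw'MK (hMKw θ)
        (fun x => κ x - Real.log (v θ x)) (c + Real.log (lam θ)) ?_).symm⟩
      intro x y hE
      rw [hform x y hE, hlogw θ x y hE, hg x y]; ring
    · rintro ⟨θ, rfl⟩
      refine ⟨hMKw θ, fun x y => ∑ i, θ i * F i x y, ?_,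
        fun x => Real.log (v θ x), -(Real.log (lam θ)), ?_⟩
      · rw [← hFspan]
        have hgeq : (fun x y => ∑ i, θ i * F i x y) = ∑ i, θ i • F i := by
          funext x y
          simp [Finset.sum_apply, Pi.smul_apply, smul_eq_mul]
        rw [hgeq]
        exact Submodule.sum_mem _ fun i _ =>
          Submodule.smul_mem _ _ (Submodule.subset_span ⟨i, rfl⟩)
      · intro x y hE
        rw [hlogw θ x y hE]; ring
end

section
/- Let {w_θ : θ ∈ ℝ^d} ⊆ W(X,E) be an exponential family given by C, F_1, …, F_d, K, ψ, and assume K_θ(x) and ψ(θ) are twice continuously differentiable in θ. Let p_θ denote the stationary distribution of w_θ and assume θ ↦ p_θ is continuously differentiable. Then for all i, j and all θ ∈ ℝ^d, the Fisher information g_ij(θ) := Σ_{(x,y)∈E} p_θ(x) w_θ(y|x) (∂_i log w_θ(y|x))(∂_j log w_θ(y|x)) equals ∂_i ∂_j ψ(θ), where ∂_i = ∂/∂θ^i. -/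
open scoped BigOperators

/-- `p` is the (positive) stationary distribution of the Markov kernel `w`. -/
def IsStationaryDistribution {X : Type*} [Fintype X] (w : X → X → ℝ) (p : X → ℝ) : Prop :=
  (∀ x, 0 < p x) ∧ (∑ x, p x = 1) ∧ (∀ y, ∑ x, p x * w x y = p y)

/-- The partial derivative `∂f/∂θⁱ` of a function `f : ℝ^d → ℝ` at `θ`. -/
noncomputable def pd {d : ℕ} (f : (Fin d → ℝ) → ℝ) (i : Fin d) (θ : Fin d → ℝ) : ℝ :=
  fderiv ℝ f θ (Pi.single i 1)

lemma contDiff_pd' {d : ℕ} {f : (Fin d → ℝ) → ℝ} (hf : ContDiff ℝ 2 f) (j : Fin d) :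
    ContDiff ℝ 1 (fun θ => pd f j θ) := by
  have h1 : ContDiff ℝ 1 (fderiv ℝ f) := hf.fderiv_right (by norm_num)
  exact h1.clm_apply contDiff_const

lemma hasFDerivAt_linpart' {d : ℕ} (a : Fin d → ℝ) (θ : Fin d → ℝ) :
    HasFDerivAt (fun θ' : Fin d → ℝ => ∑ k, θ' k * a k)
      (∑ k, a k • (ContinuousLinearMap.proj k : ((_ : Fin d) → ℝ) →L[ℝ] ℝ)) θ := by
  have h : (fun θ' : Fin d → ℝ => ∑ k, θ' k * a k)
      = fun θ' => (∑ k, a k • (ContinuousLinearMap.proj k : ((_ : Fin d) → ℝ) →L[ℝ] ℝ)) θ' := by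
    funext θ'
    simp [ContinuousLinearMap.sum_apply, mul_comm]
  rw [h]
  exact (∑ k, a k • (ContinuousLinearMap.proj k : ((_ : Fin d) → ℝ) →L[ℝ] ℝ)).hasFDerivAt

lemma linpart_apply' {d : ℕ} (a : Fin d → ℝ) (i : Fin d) :
    (∑ k, a k • (ContinuousLinearMap.proj k : ((_ : Fin d) → ℝ) →L[ℝ] ℝ)) (Pi.single i 1) = a i := by
  simp [ContinuousLinearMap.sum_apply, Pi.single_apply]

/-- Theorem 3. For an exponential family
`{w_θ : θ ∈ ℝ^d} ⊆ W(X,E)` given by `C, F₁, …, F_d, K, ψ` (with `K` and `ψ` twice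
continuously differentiable in `θ` and the stationary distribution `p_θ`
continuously differentiable in `θ`), the Fisher information matrix with respect to
the natural parameter satisfies `g_ij(θ) = ∂_i ∂_j ψ(θ)`. -/
theorem fisher_information_eq_hessian_psi
    {X : Type*} [Fintype X] [DecidableEq X] {d : ℕ}
    (hX : 2 ≤ Fintype.card X)
    (E : Finset (X × X)) (hconn : StronglyConnected E)
    (C : X → X → ℝ) (F : Fin d → X → X → ℝ) (K : (Fin d → ℝ) → X → ℝ)
    (ψ : (Fin d → ℝ) → ℝ) (w : (Fin d → ℝ) → X → X → ℝ)
    (hlog : ∀ θ x y, (x, y) ∈ E →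
      Real.log (w θ x y) = C x y + ∑ i, θ i * F i x y + K θ y - K θ x - ψ θ)
    (hzero : ∀ θ x y, (x, y) ∉ E → w θ x y = 0)
    (hker : ∀ θ, IsMarkovKernel E (w θ))
    (hK : ∀ x, ContDiff ℝ 2 (fun θ => K θ x)) (hψ : ContDiff ℝ 2 ψ)
    (p : (Fin d → ℝ) → X → ℝ) (hp : ∀ θ, IsStationaryDistribution (w θ) (p θ))
    (hpC : ∀ x, ContDiff ℝ 1 (fun θ => p θ x))
    (i j : Fin d) (θ : Fin d → ℝ) :
    ∑ e ∈ E, p θ e.1 * w θ e.1 e.2 *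
        pd (fun θ' => Real.log (w θ' e.1 e.2)) i θ *
        pd (fun θ' => Real.log (w θ' e.1 e.2)) j θ
      = pd (fun θ' => pd ψ j θ') i θ := by
  classical
  -- the explicit potential
  set Φ : X → X → (Fin d → ℝ) → ℝ :=
    fun x y θ' => C x y + ∑ k, θ' k * F k x y + K θ' y - K θ' x - ψ θ' with hΦdef
  have hwE : ∀ x y, (x, y) ∈ E → ∀ θ', w θ' x y = Real.exp (Φ x y θ') := by
    intro x y hxy θ'
    have hpos : 0 < w θ' x y := ((hker θ').2.2 x y).2 hxy
    simp only [hΦdef]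
    rw [← hlog θ' x y hxy, Real.exp_log hpos]
  have hKdiff : ∀ (z : X) θ', HasFDerivAt (fun t => K t z) (fderiv ℝ (fun t => K t z) θ') θ' :=
    fun z θ' => (((hK z).differentiable (by norm_num)) θ').hasFDerivAt
  have hψdiff : ∀ θ', HasFDerivAt ψ (fderiv ℝ ψ θ') θ' :=
    fun θ' => ((hψ.differentiable (by norm_num)) θ').hasFDerivAt
  set L : X → X → (Fin d → ℝ) → ((Fin d → ℝ) →L[ℝ] ℝ) := fun x y θ' =>
    (∑ k, F k x y • (ContinuousLinearMap.proj k : ((_ : Fin d) → ℝ) →L[ℝ] ℝ))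
      + fderiv ℝ (fun t => K t y) θ' - fderiv ℝ (fun t => K t x) θ' - fderiv ℝ ψ θ'
    with hLdef
  have hΦderiv : ∀ x y θ', HasFDerivAt (Φ x y) (L x y θ') θ' := by
    intro x y θ'
    simp only [hΦdef, hLdef]
    exact ((((hasFDerivAt_linpart' (fun k => F k x y) θ').const_add (C x y)).add
      (hKdiff y θ')).sub (hKdiff x θ')).sub (hψdiff θ')
  set G : Fin d → X → X → (Fin d → ℝ) → ℝ := fun m x y θ' =>
    F m x y + pd (fun t => K t y) m θ' - pd (fun t => K t x) m θ' - pd ψ m θ' with hGdef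
  have hLapply : ∀ (m : Fin d) x y θ', L x y θ' (Pi.single m 1) = G m x y θ' := by
    intro m x y θ'
    simp only [hLdef, hGdef, ContinuousLinearMap.sub_apply, ContinuousLinearMap.add_apply,
      linpart_apply']
    rfl
  have hpdΦ : ∀ (m : Fin d) x y θ', pd (Φ x y) m θ' = G m x y θ' := by
    intro m x y θ'
    show fderiv ℝ (Φ x y) θ' (Pi.single m 1) = G m x y θ'
    rw [(hΦderiv x y θ').fderiv, hLapply]
  have hGlog : ∀ (m : Fin d) x y, (x, y) ∈ E →
      pd (fun t => Real.log (w t x y)) m θ = G m x y θ := by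
    intro m x y hxy
    have hfun : (fun t => Real.log (w t x y)) = Φ x y := by
      funext t
      simp only [hΦdef]
      exact hlog t x y hxy
    rw [hfun]
    exact hpdΦ m x y θ
  have hwderiv : ∀ x y θ', HasFDerivAt (fun t => w t x y) (w θ' x y • L x y θ') θ' := by
    intro x y θ'
    by_cases hxy : (x, y) ∈ E
    · have hfun : (fun t => w t x y) = fun t => Real.exp (Φ x y t) :=
        funext fun t => hwE x y hxy t
      rw [hfun, hwE x y hxy θ']
      exact (hΦderiv x y θ').exp
    · have hfun : (fun t => w t x y) = fun _ => 0 := funext fun t => hzero t x y hxy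
      rw [hfun, hzero θ' x y hxy, zero_smul]
      exact hasFDerivAt_const 0 θ'
  -- first differentiation of the normalization identity
  have pass1 : ∀ (m : Fin d) x θ', ∑ y, w θ' x y * G m x y θ' = 0 := by
    intro m x θ'
    have hS : HasFDerivAt (fun t => ∑ y, w t x y) (∑ y, w θ' x y • L x y θ') θ' := by
      refine HasFDerivAt.fun_sum (𝕜 := ℝ) ?_
      intro y _
      exact hwderiv x y θ'
    have hS0 : HasFDerivAt (fun t => ∑ y, w t x y) (0 : (Fin d → ℝ) →L[ℝ] ℝ) θ' := by
      have hfun : (fun t : Fin d → ℝ => ∑ y, w t x y) = fun _ => 1 :=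
        funext fun t => (hker t).2.1 x
      rw [hfun]
      exact hasFDerivAt_const 1 θ'
    have h0 : (∑ y, w θ' x y • L x y θ') = 0 := hS.unique hS0
    have happ : (∑ y, w θ' x y • L x y θ') (Pi.single m 1) = ∑ y, w θ' x y * G m x y θ' := by
      rw [ContinuousLinearMap.sum_apply]
      refine Finset.sum_congr rfl fun y _ => ?_
      rw [ContinuousLinearMap.smul_apply, hLapply, smul_eq_mul]
    rw [← happ, h0, ContinuousLinearMap.zero_apply]
  -- second derivatives
  set κ : X → ℝ := fun z => pd (fun t => pd (fun s => K s z) j t) i θ with hκdef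
  set Ψ : ℝ := pd (fun θ' => pd ψ j θ') i θ with hΨdef
  set N : X → X → ((Fin d → ℝ) →L[ℝ] ℝ) := fun x y =>
    fderiv ℝ (fun t => pd (fun s => K s y) j t) θ - fderiv ℝ (fun t => pd (fun s => K s x) j t) θ
      - fderiv ℝ (fun t => pd ψ j t) θ with hNdef
  have hGderiv : ∀ x y, HasFDerivAt (G j x y) (N x y) θ := by
    intro x y
    have h1 : HasFDerivAt (fun t => pd (fun s => K s y) j t)
        (fderiv ℝ (fun t => pd (fun s => K s y) j t) θ) θ :=
      ((((contDiff_pd' (hK y) j).differentiable one_ne_zero)) θ).hasFDerivAt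
    have h2 : HasFDerivAt (fun t => pd (fun s => K s x) j t)
        (fderiv ℝ (fun t => pd (fun s => K s x) j t) θ) θ :=
      ((((contDiff_pd' (hK x) j).differentiable one_ne_zero)) θ).hasFDerivAt
    have h3 : HasFDerivAt (fun t => pd ψ j t)
        (fderiv ℝ (fun t => pd ψ j t) θ) θ :=
      ((((contDiff_pd' hψ j).differentiable one_ne_zero)) θ).hasFDerivAt
    exact ((h1.const_add (F j x y)).sub h2).sub h3
  have hNapply : ∀ x y, N x y (Pi.single i 1) = κ y - κ x - Ψ := by
    intro x y
    simp only [hNdef, ContinuousLinearMap.sub_apply, hκdef, hΨdef]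
    rfl
  -- second differentiation
  have pass2 : ∀ x, ∑ y, (w θ x y * (κ y - κ x - Ψ) + w θ x y * (G i x y θ * G j x y θ)) = 0 := by
    intro x
    have hT : HasFDerivAt (fun t => ∑ y, w t x y * G j x y t)
        (∑ y, (w θ x y • N x y + G j x y θ • (w θ x y • L x y θ))) θ := by
      refine HasFDerivAt.fun_sum (𝕜 := ℝ) ?_
      intro y _
      exact (hwderiv x y θ).mul (hGderiv x y)
    have hT0 : HasFDerivAt (fun t => ∑ y, w t x y * G j x y t) (0 : (Fin d → ℝ) →L[ℝ] ℝ) θ := by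
      have hfun : (fun t => ∑ y, w t x y * G j x y t) = fun _ => 0 :=
        funext fun t => pass1 j x t
      rw [hfun]
      exact hasFDerivAt_const 0 θ
    have h0 := hT.unique hT0
    have happ : (∑ y, (w θ x y • N x y + G j x y θ • (w θ x y • L x y θ))) (Pi.single i 1)
        = ∑ y, (w θ x y * (κ y - κ x - Ψ) + w θ x y * (G i x y θ * G j x y θ)) := by
      rw [ContinuousLinearMap.sum_apply]
      refine Finset.sum_congr rfl fun y _ => ?_
      rw [ContinuousLinearMap.add_apply, ContinuousLinearMap.smul_apply,
        ContinuousLinearMap.smul_apply, ContinuousLinearMap.smul_apply, hNapply, hLapply]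
      simp only [smul_eq_mul]
      ring
    rw [← happ, h0, ContinuousLinearMap.zero_apply]
  -- the per-state identity
  have key : ∀ x, ∑ y, w θ x y * (G i x y θ * G j x y θ) = Ψ + κ x - ∑ y, w θ x y * κ y := by
    intro x
    have h := pass2 x
    rw [Finset.sum_add_distrib] at h
    have hsumw : ∑ y, w θ x y = 1 := (hker θ).2.1 x
    have expand : ∑ y, w θ x y * (κ y - κ x - Ψ) = (∑ y, w θ x y * κ y) - (κ x + Ψ) := by
      have h1 : ∀ y : X, w θ x y * (κ y - κ x - Ψ) = w θ x y * κ y - w θ x y * (κ x + Ψ) :=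
        fun y => by ring
      rw [Finset.sum_congr rfl fun y _ => h1 y, Finset.sum_sub_distrib, ← Finset.sum_mul,
        hsumw, one_mul]
    linarith [h, expand]
  -- rewrite the Fisher sum over edges as a double sum
  have hLHS : ∑ e ∈ E, p θ e.1 * w θ e.1 e.2 *
        pd (fun θ' => Real.log (w θ' e.1 e.2)) i θ *
        pd (fun θ' => Real.log (w θ' e.1 e.2)) j θ
      = ∑ x, p θ x * ∑ y, w θ x y * (G i x y θ * G j x y θ) := by
    rw [Finset.sum_subset (Finset.subset_univ E) (fun e _ he => by
      rw [hzero θ e.1 e.2 he]; ring)]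
    rw [Fintype.sum_prod_type]
    refine Finset.sum_congr rfl fun x _ => ?_
    rw [Finset.mul_sum]
    refine Finset.sum_congr rfl fun y _ => ?_
    by_cases hxy : (x, y) ∈ E
    · rw [hGlog i x y hxy, hGlog j x y hxy]; ring
    · rw [hzero θ x y hxy]; ring
  rw [hLHS]
  -- assemble using stationarity
  obtain ⟨hppos, hpsum, hpstat⟩ := hp θ
  have swap : ∑ x, ∑ y, p θ x * (w θ x y * κ y) = ∑ x, p θ x * κ x := by
    rw [Finset.sum_comm]
    refine Finset.sum_congr rfl fun y _ => ?_
    have : ∑ x, p θ x * (w θ x y * κ y) = (∑ x, p θ x * w θ x y) * κ y := by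
      rw [Finset.sum_mul]
      exact Finset.sum_congr rfl fun x _ => by ring
    rw [this, hpstat y]
  calc ∑ x, p θ x * ∑ y, w θ x y * (G i x y θ * G j x y θ)
      = ∑ x, (p θ x * Ψ + p θ x * κ x - ∑ y, p θ x * (w θ x y * κ y)) := by
        refine Finset.sum_congr rfl fun x _ => ?_
        rw [key x, ← Finset.mul_sum]
        ring
    _ = (∑ x, p θ x) * Ψ + ∑ x, p θ x * κ x - ∑ x, ∑ y, p θ x * (w θ x y * κ y) := by
        rw [Finset.sum_sub_distrib, Finset.sum_add_distrib, Finset.sum_mul]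
    _ = Ψ := by rw [swap, hpsum, one_mul]; ring
end

section
/- Let {w_θ : θ ∈ ℝ^d} ⊆ W(X,E) be an exponential family given by C, F_1, …, F_d, K, ψ, and assume K_θ(x) and ψ(θ) are continuously differentiable in θ. Let p_θ denote the stationary distribution of w_θ. Then for all i and all θ ∈ ℝ^d, the expectation parameter η_i(θ) := Σ_{(x,y)∈E} p_θ(x) w_θ(y|x) F_i(x,y) equals ∂_i ψ(θ), where ∂_i = ∂/∂θ^i. -/
open scoped BigOperators

/-- `p` is the (positive) stationary distribution of the Markov kernel `w`. -/
def IsStationaryDistr {X : Type*} [Fintype X] (w : X → X → ℝ) (p : X → ℝ) : Prop :=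
  (∀ x, 0 < p x) ∧ (∑ x, p x = 1) ∧ (∀ y, ∑ x, p x * w x y = p y)

/-- expectation parameters. For an exponential family
`{w_θ : θ ∈ ℝ^d} ⊆ W(X,E)` given by `C, F₁, …, F_d, K, ψ` (with `K` and `ψ`
continuously differentiable in `θ`), the expectation parameter
`η_i(θ) = Σ_{(x,y)∈E} p_θ(x) w_θ(y|x) F_i(x,y)` equals `∂_i ψ(θ)`. -/
theorem expectation_parameter_eq_grad_psi
    {X : Type*} [Fintype X] [DecidableEq X] {d : ℕ}
    (hX : 2 ≤ Fintype.card X)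
    (E : Finset (X × X)) (hconn : StronglyConnected E)
    (C : X → X → ℝ) (F : Fin d → X → X → ℝ) (K : (Fin d → ℝ) → X → ℝ)
    (ψ : (Fin d → ℝ) → ℝ) (w : (Fin d → ℝ) → X → X → ℝ)
    (hlog : ∀ θ x y, (x, y) ∈ E →
      Real.log (w θ x y) = C x y + ∑ i, θ i * F i x y + K θ y - K θ x - ψ θ)
    (hzero : ∀ θ x y, (x, y) ∉ E → w θ x y = 0)
    (hker : ∀ θ, IsMarkovKernel E (w θ))
    (hK : ∀ x, ContDiff ℝ 1 (fun θ => K θ x)) (hψ : ContDiff ℝ 1 ψ)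
    (p : (Fin d → ℝ) → X → ℝ) (hp : ∀ θ, IsStationaryDistr (w θ) (p θ))
    (i : Fin d) (θ : Fin d → ℝ) :
    ∑ e ∈ E, p θ e.1 * w θ e.1 e.2 * F i e.1 e.2 = pd ψ i θ := by

  classical
  set v : Fin d → ℝ := Pi.single i 1 with hv
  set a : X → ℝ := fun x => fderiv ℝ (fun θ' => K θ' x) θ v with ha
  set c : ℝ := fderiv ℝ ψ θ v with hc
  have hKd : ∀ x : X, HasFDerivAt (fun θ' => K θ' x) (fderiv ℝ (fun θ' => K θ' x) θ) θ :=
    fun x => (((hK x).differentiable one_ne_zero) θ).hasFDerivAt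
  have hψd : HasFDerivAt ψ (fderiv ℝ ψ θ) θ := ((hψ.differentiable one_ne_zero) θ).hasFDerivAt
  have hwpos : ∀ (θ' : Fin d → ℝ) x y, (x, y) ∈ E → 0 < w θ' x y :=
    fun θ' x y h => ((hker θ').2.2 x y).mpr h
  have hW : ∀ x y : X, ∃ L : (Fin d → ℝ) →L[ℝ] ℝ,
      HasFDerivAt (fun θ' => w θ' x y) L θ ∧
      L v = w θ x y * (F i x y + a y - a x - c) := by
    intro x y
    by_cases hxy : (x, y) ∈ E
    · set LF : (Fin d → ℝ) →L[ℝ] ℝ :=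
        ∑ j, (F j x y) • (ContinuousLinearMap.proj j : (Fin d → ℝ) →L[ℝ] ℝ) with hLF
      have hlin : HasFDerivAt (fun θ' : Fin d → ℝ => ∑ j, θ' j * F j x y) LF θ := by
        refine HasFDerivAt.fun_sum fun j _ => ?_
        exact (ContinuousLinearMap.proj j : (Fin d → ℝ) →L[ℝ] ℝ).hasFDerivAt.mul_const _
      have hg : HasFDerivAt (fun θ' => C x y + ∑ j, θ' j * F j x y + K θ' y - K θ' x - ψ θ')
          (LF + fderiv ℝ (fun θ' => K θ' y) θ - fderiv ℝ (fun θ' => K θ' x) θ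
            - fderiv ℝ ψ θ) θ :=
        (((hlin.const_add (C x y)).add (hKd y)).sub (hKd x)).sub hψd
      have hweq : (fun θ' => w θ' x y) =
          fun θ' => Real.exp (C x y + ∑ j, θ' j * F j x y + K θ' y - K θ' x - ψ θ') := by
        funext θ'
        rw [← hlog θ' x y hxy, Real.exp_log (hwpos θ' x y hxy)]
      refine ⟨Real.exp (C x y + ∑ j, θ j * F j x y + K θ y - K θ x - ψ θ) •
        (LF + fderiv ℝ (fun θ' => K θ' y) θ - fderiv ℝ (fun θ' => K θ' x) θ
          - fderiv ℝ ψ θ), ?_, ?_⟩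
      · rw [hweq]; exact hg.exp
      · have hwx : Real.exp (C x y + ∑ j, θ j * F j x y + K θ y - K θ x - ψ θ) = w θ x y := by
          rw [← hlog θ x y hxy, Real.exp_log (hwpos θ x y hxy)]
        have hLFv : LF v = F i x y := by
          simp [hLF, ContinuousLinearMap.sum_apply, hv, Pi.single_apply]
        simp only [ContinuousLinearMap.smul_apply, ContinuousLinearMap.sub_apply,
          ContinuousLinearMap.add_apply, hwx, hLFv, smul_eq_mul, ha, hc]
    · refine ⟨0, ?_, ?_⟩
      · have h0 : (fun θ' => w θ' x y) = fun _ => (0 : ℝ) :=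
          funext fun θ' => hzero θ' x y hxy
        rw [h0]; exact hasFDerivAt_const 0 θ
      · simp [hzero θ x y hxy]
  choose L hL hLv using hW
  have hkey : ∀ x, ∑ y, w θ x y * (F i x y + a y - a x - c) = 0 := by
    intro x
    have hsum : HasFDerivAt (fun θ' => ∑ y, w θ' x y) (∑ y, L x y) θ :=
      HasFDerivAt.fun_sum fun y _ => hL x y
    have hone : (fun θ' => ∑ y, w θ' x y) = fun _ => (1 : ℝ) :=
      funext fun θ' => (hker θ').2.1 x
    have hz : (∑ y, L x y) = 0 := by
      rw [hone] at hsum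
      exact hsum.unique (hasFDerivAt_const 1 θ)
    calc ∑ y, w θ x y * (F i x y + a y - a x - c) = ∑ y, (L x y) v := by
          simp [hLv]
      _ = (∑ y, L x y) v := by rw [ContinuousLinearMap.sum_apply]
      _ = 0 := by rw [hz]; simp
  obtain ⟨hp_pos, hp_sum, hp_stat⟩ := hp θ
  have hkey2 : ∀ x, ∑ y, w θ x y * (F i x y + a y) = a x + c := by
    intro x
    have h1 := hkey x
    have h2 : ∑ y, w θ x y * (F i x y + a y - a x - c)
        = (∑ y, w θ x y * (F i x y + a y)) - (a x + c) * ∑ y, w θ x y := by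
      rw [Finset.mul_sum, ← Finset.sum_sub_distrib]
      exact Finset.sum_congr rfl fun y _ => by ring
    rw [h2, (hker θ).2.1 x] at h1
    linarith
  have hmain : ∑ x, ∑ y, p θ x * w θ x y * F i x y = c := by
    have e1 : ∑ x, p θ x * (a x + c)
        = ∑ x, ∑ y, p θ x * (w θ x y * (F i x y + a y)) := by
      refine Finset.sum_congr rfl fun x _ => ?_
      rw [← hkey2 x, Finset.mul_sum]
    have e2 : ∑ x, ∑ y, p θ x * (w θ x y * (F i x y + a y))
        = (∑ x, ∑ y, p θ x * w θ x y * F i x y)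
          + ∑ x, ∑ y, p θ x * w θ x y * a y := by
      rw [← Finset.sum_add_distrib]
      refine Finset.sum_congr rfl fun x _ => ?_
      rw [← Finset.sum_add_distrib]
      exact Finset.sum_congr rfl fun y _ => by ring
    have e3 : ∑ x, ∑ y, p θ x * w θ x y * a y = ∑ y, p θ y * a y := by
      rw [Finset.sum_comm]
      refine Finset.sum_congr rfl fun y _ => ?_
      rw [← hp_stat y, Finset.sum_mul]
    have e4 : ∑ x, p θ x * (a x + c) = (∑ x, p θ x * a x) + c := by
      have : ∑ x, p θ x * (a x + c) = (∑ x, p θ x * a x) + (∑ x, p θ x) * c := by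
        rw [Finset.sum_mul, ← Finset.sum_add_distrib]
        exact Finset.sum_congr rfl fun x _ => by ring
      rw [this, hp_sum, one_mul]
    have := e4.symm.trans (e1.trans (e2.trans (by rw [e3])))
    linarith
  have hE : ∑ e ∈ E, p θ e.1 * w θ e.1 e.2 * F i e.1 e.2
      = ∑ e : X × X, p θ e.1 * w θ e.1 e.2 * F i e.1 e.2 := by
    refine Finset.sum_subset (Finset.subset_univ E) ?_
    intro e _ he
    rw [hzero θ e.1 e.2 (by simpa using he)]
    ring
  rw [hE, Fintype.sum_prod_type, hmain]
  simp [pd, hc, hv]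
end

section
/- Let {w_θ : θ ∈ ℝ^d} ⊆ W(X,E) be an exponential family given by C, F_1, …, F_d, K, ψ, and assume K_θ(x) and ψ(θ) are twice continuously differentiable in θ and that θ ↦ p_θ is continuously differentiable, where p_θ is the stationary distribution of w_θ. Define η_j(θ) = Σ_{(x,y)∈E} p_θ(x) w_θ(y|x) F_j(x,y) and g_ij(θ) = Σ_{(x,y)∈E} p_θ(x) w_θ(y|x) (∂_i log w_θ(y|x))(∂_j log w_θ(y|x)). Then ∂_i η_j(θ) = g_ij(θ) for all i, j and all θ ∈ ℝ^d. -/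
open scoped BigOperators

/-- `p` is the (positive) stationary distribution of the Markov kernel `w`. -/
def IsMarkovStationary {X : Type*} [Fintype X] (w : X → X → ℝ) (p : X → ℝ) : Prop :=
  (∀ x, 0 < p x) ∧ (∑ x, p x = 1) ∧ (∀ y, ∑ x, p x * w x y = p y)

/-- For an exponential family `{w_θ : θ ∈ ℝ^d} ⊆ W(X,E)` given by
`C, F₁, …, F_d, K, ψ` (with `K`, `ψ` twice continuously differentiable in `θ` and
the stationary distribution `p_θ` continuously differentiable in `θ`), the Jacobian
of the expectation parameters equals the Fisher information matrix:
`∂_i η_j(θ) = g_ij(θ)`. -/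
theorem grad_expectation_parameter_eq_fisher
    {X : Type*} [Fintype X] [DecidableEq X] {d : ℕ}
    (hX : 2 ≤ Fintype.card X)
    (E : Finset (X × X)) (hconn : StronglyConnected E)
    (C : X → X → ℝ) (F : Fin d → X → X → ℝ) (K : (Fin d → ℝ) → X → ℝ)
    (ψ : (Fin d → ℝ) → ℝ) (w : (Fin d → ℝ) → X → X → ℝ)
    (hlog : ∀ θ x y, (x, y) ∈ E →
      Real.log (w θ x y) = C x y + ∑ i, θ i * F i x y + K θ y - K θ x - ψ θ)
    (hzero : ∀ θ x y, (x, y) ∉ E → w θ x y = 0)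
    (hker : ∀ θ, IsMarkovKernel E (w θ))
    (hK : ∀ x, ContDiff ℝ 2 (fun θ => K θ x)) (hψ : ContDiff ℝ 2 ψ)
    (p : (Fin d → ℝ) → X → ℝ) (hp : ∀ θ, IsMarkovStationary (w θ) (p θ))
    (hpC : ∀ x, ContDiff ℝ 1 (fun θ => p θ x))
    (i j : Fin d) (θ : Fin d → ℝ) :
    pd (fun θ' => ∑ e ∈ E, p θ' e.1 * w θ' e.1 e.2 * F j e.1 e.2) i θ
      = ∑ e ∈ E, p θ e.1 * w θ e.1 e.2 *
          pd (fun θ' => Real.log (w θ' e.1 e.2)) i θ *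
          pd (fun θ' => Real.log (w θ' e.1 e.2)) j θ := by
  classical
  -- notation
  set L : X × X → (Fin d → ℝ) → ℝ :=
    fun e θ' => C e.1 e.2 + ∑ k, θ' k * F k e.1 e.2 + K θ' e.2 - K θ' e.1 - ψ θ' with hLdef
  have hwexp : ∀ (θ' : Fin d → ℝ) (e : X × X), e ∈ E → w θ' e.1 e.2 = Real.exp (L e θ') := by
    intro θ' e he
    have hpos : 0 < w θ' e.1 e.2 := ((hker θ').2.2 e.1 e.2).mpr he
    have h1 := hlog θ' e.1 e.2 he
    have h2 : L e θ' = Real.log (w θ' e.1 e.2) := by rw [hLdef]; exact h1.symm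
    rw [h2, Real.exp_log hpos]
  -- differentiability
  have hKd : ∀ x, Differentiable ℝ (fun θ' => K θ' x) :=
    fun x => (hK x).differentiable (by norm_num)
  have hψd : Differentiable ℝ ψ := hψ.differentiable (by norm_num)
  have hpdiff : ∀ x, Differentiable ℝ (fun θ' => p θ' x) :=
    fun x => (hpC x).differentiable one_ne_zero
  -- derivative continuous linear maps
  set DK : X → (Fin d → ℝ) →L[ℝ] ℝ := fun x => fderiv ℝ (fun θ' => K θ' x) θ with hDKdef
  set Dψ : (Fin d → ℝ) →L[ℝ] ℝ := fderiv ℝ ψ θ with hDψdef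
  set SL : X × X → (Fin d → ℝ) →L[ℝ] ℝ :=
    fun e => ∑ k, F k e.1 e.2 • ContinuousLinearMap.proj (R := ℝ) (φ := fun _ : Fin d => ℝ) k
    with hSLdef
  set DL : X × X → (Fin d → ℝ) →L[ℝ] ℝ := fun e => SL e + DK e.2 - DK e.1 - Dψ with hDLdef
  have hSL_has : ∀ e : X × X,
      HasFDerivAt (fun θ' : Fin d → ℝ => ∑ k, θ' k * F k e.1 e.2) (SL e) θ := by
    intro e
    have heq : (fun θ' : Fin d → ℝ => ∑ k, θ' k * F k e.1 e.2) = ⇑(SL e) := by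
      funext θ'
      simp [hSLdef, mul_comm]
    rw [heq]
    exact (SL e).hasFDerivAt
  have hLhas : ∀ e : X × X, HasFDerivAt (L e) (DL e) θ := by
    intro e
    rw [hLdef, hDLdef]
    exact (((hSL_has e).const_add (C e.1 e.2)).add (hKd e.2 θ).hasFDerivAt).sub
      ((hKd e.1 θ).hasFDerivAt) |>.sub (hψd θ).hasFDerivAt
  have hSLval : ∀ (e : X × X) (k : Fin d), SL e (Pi.single k 1) = F k e.1 e.2 := by
    intro e k
    simp [hSLdef, ContinuousLinearMap.sum_apply, Pi.single_apply]
  have hDLval : ∀ (e : X × X) (k : Fin d),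
      DL e (Pi.single k 1) = F k e.1 e.2 + DK e.2 (Pi.single k 1) - DK e.1 (Pi.single k 1)
        - Dψ (Pi.single k 1) := by
    intro e k
    rw [hDLdef]
    simp [ContinuousLinearMap.sub_apply, ContinuousLinearMap.add_apply, hSLval]
  -- pd of log w
  have hpdlog : ∀ (k : Fin d) (e : X × X), e ∈ E →
      pd (fun θ' => Real.log (w θ' e.1 e.2)) k θ = DL e (Pi.single k 1) := by
    intro k e he
    have hfun : (fun θ' => Real.log (w θ' e.1 e.2)) = L e := by
      funext θ'
      rw [hlog θ' e.1 e.2 he, hLdef]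
    rw [pd, hfun, (hLhas e).fderiv]
  -- sum over edges vs double sum
  have hsumE : ∀ f : X × X → ℝ, (∀ e, e ∉ E → f e = 0) →
      ∑ e ∈ E, f e = ∑ x, ∑ y, f (x, y) := by
    intro f hf
    rw [← Fintype.sum_prod_type]
    exact Finset.sum_subset (Finset.subset_univ E) (fun e _ he => hf e he)
  have hrow : ∀ (θ' : Fin d → ℝ) (g : X → ℝ),
      ∑ e ∈ E, g e.1 * w θ' e.1 e.2 = ∑ x, g x := by
    intro θ' g
    rw [hsumE _ (fun e he => by rw [hzero θ' e.1 e.2 he, mul_zero])]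
    show ∑ x, ∑ y, g x * w θ' x y = ∑ x, g x
    refine Finset.sum_congr rfl fun x _ => ?_
    rw [← Finset.mul_sum, (hker θ').2.1 x, mul_one]
  have hstat : ∀ (θ' : Fin d → ℝ) (h : X → ℝ),
      ∑ e ∈ E, p θ' e.1 * w θ' e.1 e.2 * (h e.2 - h e.1) = 0 := by
    intro θ' h
    rw [hsumE _ (fun e he => by rw [hzero θ' e.1 e.2 he, mul_zero, zero_mul])]
    show ∑ x, ∑ y, p θ' x * w θ' x y * (h y - h x) = 0
    have h1 : ∑ x, ∑ y, p θ' x * w θ' x y * h y = ∑ x, p θ' x * h x := by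
      rw [Finset.sum_comm]
      calc ∑ y, ∑ x, p θ' x * w θ' x y * h y
          = ∑ y, (∑ x, p θ' x * w θ' x y) * h y := by
            refine Finset.sum_congr rfl fun y _ => ?_
            rw [Finset.sum_mul]
        _ = ∑ y, p θ' y * h y := by
            refine Finset.sum_congr rfl fun y _ => ?_
            rw [(hp θ').2.2 y]
    have h2 : ∑ x, ∑ y, p θ' x * w θ' x y * h x = ∑ x, p θ' x * h x := by
      refine Finset.sum_congr rfl fun x _ => ?_
      have : ∀ y, p θ' x * w θ' x y * h x = p θ' x * h x * w θ' x y := fun y => by ring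
      simp only [this]
      rw [← Finset.mul_sum, (hker θ').2.1 x, mul_one]
    have hexp : ∀ (x y : X), p θ' x * w θ' x y * (h y - h x)
        = p θ' x * w θ' x y * h y - p θ' x * w θ' x y * h x := fun x y => by ring
    simp only [hexp, Finset.sum_sub_distrib]
    rw [h1, h2, sub_self]
  -- identity Iα : row-sum derivative
  have hIα : ∀ (g : X → ℝ) (k : Fin d),
      ∑ e ∈ E, g e.1 * (w θ e.1 e.2 * DL e (Pi.single k 1)) = 0 := by
    intro g k
    have hterm : ∀ e ∈ E, HasFDerivAt (fun θ' => g e.1 * Real.exp (L e θ'))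
        (g e.1 • (Real.exp (L e θ) • DL e)) θ :=
      fun e _ => ((hLhas e).exp).const_mul (g e.1)
    have hsum := HasFDerivAt.fun_sum hterm
    have hconst : (fun θ' => ∑ e ∈ E, g e.1 * Real.exp (L e θ')) = fun _ => ∑ x, g x := by
      funext θ'
      rw [← hrow θ' g]
      exact (Finset.sum_congr rfl fun e he => by rw [hwexp θ' e he]).symm
    rw [hconst] at hsum
    have huniq := hsum.unique (hasFDerivAt_const _ _)
    have h0 := congrArg (fun T : (Fin d → ℝ) →L[ℝ] ℝ => T (Pi.single k 1)) huniq
    simp only [ContinuousLinearMap.sum_apply, ContinuousLinearMap.smul_apply,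
      ContinuousLinearMap.zero_apply, smul_eq_mul] at h0
    rw [← h0]
    exact Finset.sum_congr rfl fun e he => by rw [hwexp θ e he]
  -- derivative of total mass of p
  have hDpsum : ∑ x, (fderiv ℝ (fun θ' => p θ' x) θ) (Pi.single i 1) = 0 := by
    have hterm : ∀ x ∈ (Finset.univ : Finset X),
        HasFDerivAt (fun θ' => p θ' x) (fderiv ℝ (fun θ' => p θ' x) θ) θ :=
      fun x _ => (hpdiff x θ).hasFDerivAt
    have hsum := HasFDerivAt.fun_sum hterm
    have hconst : (fun θ' => ∑ x, p θ' x) = fun _ => (1 : ℝ) :=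
      funext fun θ' => (hp θ').2.1
    rw [hconst] at hsum
    have huniq := hsum.unique (hasFDerivAt_const _ _)
    have h0 := congrArg (fun T : (Fin d → ℝ) →L[ℝ] ℝ => T (Pi.single i 1)) huniq
    simpa using h0
  -- identity I3
  have hI3 : ∑ e ∈ E, (fderiv ℝ (fun θ' => p θ' e.1) θ) (Pi.single i 1) * w θ e.1 e.2 = 0 := by
    rw [hrow θ (fun x => (fderiv ℝ (fun θ' => p θ' x) θ) (Pi.single i 1))]
    exact hDpsum
  -- identity Iβ : stationarity derivative with h = DK · (single j 1)
  have hIβ : ∑ e ∈ E,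
      (p θ e.1 * (w θ e.1 e.2 * DL e (Pi.single i 1))
        + w θ e.1 e.2 * (fderiv ℝ (fun θ' => p θ' e.1) θ) (Pi.single i 1))
      * (DK e.2 (Pi.single j 1) - DK e.1 (Pi.single j 1)) = 0 := by
    have hterm : ∀ e ∈ E, HasFDerivAt
        (fun θ' => p θ' e.1 * Real.exp (L e θ')
          * (DK e.2 (Pi.single j 1) - DK e.1 (Pi.single j 1)))
        ((DK e.2 (Pi.single j 1) - DK e.1 (Pi.single j 1)) •
          (p θ e.1 • (Real.exp (L e θ) • DL e)
            + Real.exp (L e θ) • fderiv ℝ (fun θ' => p θ' e.1) θ)) θ :=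
      fun e _ => ((hpdiff e.1 θ).hasFDerivAt.mul (hLhas e).exp).mul_const _
    have hsum := HasFDerivAt.fun_sum hterm
    have hconst : (fun θ' => ∑ e ∈ E, p θ' e.1 * Real.exp (L e θ')
        * (DK e.2 (Pi.single j 1) - DK e.1 (Pi.single j 1))) = fun _ => (0 : ℝ) := by
      funext θ'
      rw [← hstat θ' (fun x => DK x (Pi.single j 1))]
      exact (Finset.sum_congr rfl fun e he => by rw [hwexp θ' e he]).symm
    rw [hconst] at hsum
    have huniq := hsum.unique (hasFDerivAt_const _ _)
    have h0 := congrArg (fun T : (Fin d → ℝ) →L[ℝ] ℝ => T (Pi.single i 1)) huniq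
    simp only [ContinuousLinearMap.sum_apply, ContinuousLinearMap.smul_apply,
      ContinuousLinearMap.add_apply, ContinuousLinearMap.zero_apply, smul_eq_mul] at h0
    rw [← h0]
    refine Finset.sum_congr rfl fun e he => ?_
    rw [hwexp θ e he]
    ring
  -- compute the left-hand side
  have hLHS : pd (fun θ' => ∑ e ∈ E, p θ' e.1 * w θ' e.1 e.2 * F j e.1 e.2) i θ
      = ∑ e ∈ E,
        (p θ e.1 * (w θ e.1 e.2 * DL e (Pi.single i 1))
          + w θ e.1 e.2 * (fderiv ℝ (fun θ' => p θ' e.1) θ) (Pi.single i 1)) * F j e.1 e.2 := by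
    have hfun : (fun θ' => ∑ e ∈ E, p θ' e.1 * w θ' e.1 e.2 * F j e.1 e.2)
        = fun θ' => ∑ e ∈ E, p θ' e.1 * Real.exp (L e θ') * F j e.1 e.2 := by
      funext θ'
      exact Finset.sum_congr rfl fun e he => by rw [hwexp θ' e he]
    have hterm : ∀ e ∈ E, HasFDerivAt
        (fun θ' => p θ' e.1 * Real.exp (L e θ') * F j e.1 e.2)
        (F j e.1 e.2 • (p θ e.1 • (Real.exp (L e θ) • DL e)
          + Real.exp (L e θ) • fderiv ℝ (fun θ' => p θ' e.1) θ)) θ :=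
      fun e _ => ((hpdiff e.1 θ).hasFDerivAt.mul (hLhas e).exp).mul_const _
    rw [pd, hfun, (HasFDerivAt.fun_sum hterm).fderiv]
    simp only [ContinuousLinearMap.sum_apply, ContinuousLinearMap.smul_apply,
      ContinuousLinearMap.add_apply, smul_eq_mul]
    refine Finset.sum_congr rfl fun e he => ?_
    rw [← hwexp θ e he]
    ring
  -- rewrite the goal
  rw [hLHS]
  have hRHS : ∑ e ∈ E, p θ e.1 * w θ e.1 e.2 *
      pd (fun θ' => Real.log (w θ' e.1 e.2)) i θ *
      pd (fun θ' => Real.log (w θ' e.1 e.2)) j θ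
      = ∑ e ∈ E, p θ e.1 * w θ e.1 e.2 * DL e (Pi.single i 1) *
        (F j e.1 e.2 + DK e.2 (Pi.single j 1) - DK e.1 (Pi.single j 1) - Dψ (Pi.single j 1)) := by
    refine Finset.sum_congr rfl fun e he => ?_
    rw [hpdlog i e he, hpdlog j e he, hDLval e j]
  rw [hRHS]
  -- final algebra
  have hI1 := hIα (fun x => p θ x) i
  have hI2 : ∑ e ∈ E, (fderiv ℝ (fun θ' => p θ' e.1) θ) (Pi.single i 1) *
      (w θ e.1 e.2 * (F j e.1 e.2 + DK e.2 (Pi.single j 1) - DK e.1 (Pi.single j 1)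
        - Dψ (Pi.single j 1))) = 0 := by
    have := hIα (fun x => (fderiv ℝ (fun θ' => p θ' x) θ) (Pi.single i 1)) j
    rw [← this]
    refine Finset.sum_congr rfl fun e he => ?_
    rw [hDLval e j]
  have hsplit : ∑ e ∈ E,
      ((p θ e.1 * (w θ e.1 e.2 * DL e (Pi.single i 1))
        + w θ e.1 e.2 * (fderiv ℝ (fun θ' => p θ' e.1) θ) (Pi.single i 1)) * F j e.1 e.2
      - p θ e.1 * w θ e.1 e.2 * DL e (Pi.single i 1) *
        (F j e.1 e.2 + DK e.2 (Pi.single j 1) - DK e.1 (Pi.single j 1) - Dψ (Pi.single j 1)))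
      = ∑ e ∈ E,
      ((fderiv ℝ (fun θ' => p θ' e.1) θ) (Pi.single i 1) *
        (w θ e.1 e.2 * (F j e.1 e.2 + DK e.2 (Pi.single j 1) - DK e.1 (Pi.single j 1)
          - Dψ (Pi.single j 1)))
      + Dψ (Pi.single j 1) * ((fderiv ℝ (fun θ' => p θ' e.1) θ) (Pi.single i 1) * w θ e.1 e.2)
      + Dψ (Pi.single j 1) * (p θ e.1 * (w θ e.1 e.2 * DL e (Pi.single i 1)))
      - (p θ e.1 * (w θ e.1 e.2 * DL e (Pi.single i 1))
          + w θ e.1 e.2 * (fderiv ℝ (fun θ' => p θ' e.1) θ) (Pi.single i 1)) *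
        (DK e.2 (Pi.single j 1) - DK e.1 (Pi.single j 1))) := by
    refine Finset.sum_congr rfl fun e he => ?_
    ring
  have hzero_sum : ∑ e ∈ E,
      ((p θ e.1 * (w θ e.1 e.2 * DL e (Pi.single i 1))
        + w θ e.1 e.2 * (fderiv ℝ (fun θ' => p θ' e.1) θ) (Pi.single i 1)) * F j e.1 e.2
      - p θ e.1 * w θ e.1 e.2 * DL e (Pi.single i 1) *
        (F j e.1 e.2 + DK e.2 (Pi.single j 1) - DK e.1 (Pi.single j 1) - Dψ (Pi.single j 1)))
      = 0 := by
    rw [hsplit]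
    rw [Finset.sum_sub_distrib, Finset.sum_add_distrib, Finset.sum_add_distrib,
      ← Finset.mul_sum, ← Finset.mul_sum]
    rw [hI2, hI3, hI1, hIβ]
    ring
  rw [Finset.sum_sub_distrib] at hzero_sum
  linarith [hzero_sum]
end

section
/- Let {w_θ : θ ∈ ℝ^d} ⊆ W(X,E) be an exponential family given by C, F_1, …, F_d, K, ψ. For θ ∈ ℝ^d let p_θ be the stationary distribution of w_θ, set p_θ^(2)(x,y) = p_θ(x) w_θ(y|x), η_i(θ) = Σ_{(x,y)∈E} p_θ^(2)(x,y) F_i(x,y), and φ(θ) = Σ_{i=1}^d θ^i η_i(θ) − ψ(θ). Then for all θ_1, θ_2 ∈ ℝ^d, the canonical divergence D(θ_1 | θ_2) := φ(θ_1) + ψ(θ_2) − Σ_{i=1}^d η_i(θ_1) θ_2^i satisfies D(θ_1 | θ_2) = Σ_{(x,y)∈E} p_{θ_1}^(2)(x,y) log( w_{θ_1}(y|x) / w_{θ_2}(y|x) ). -/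
open scoped BigOperators

/-- `p` is the (positive) stationary distribution of the Markov kernel `w`. -/
def IsStationaryDistrib {X : Type*} [Fintype X] (w : X → X → ℝ) (p : X → ℝ) : Prop :=
  (∀ x, 0 < p x) ∧ (∑ x, p x = 1) ∧ (∀ y, ∑ x, p x * w x y = p y)

/-- canonical divergence. For an exponential family
`{w_θ} ⊆ W(X,E)` with stationary distributions `p_θ`, put
`p_θ⁽²⁾(x,y) = p_θ(x) w_θ(y|x)`, `η_i(θ) = Σ_{(x,y)∈E} p_θ⁽²⁾(x,y) F_i(x,y)` and
`φ(θ) = Σ_i θⁱ η_i(θ) − ψ(θ)`.  Then the canonical divergence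
`D(θ₁|θ₂) = φ(θ₁) + ψ(θ₂) − Σ_i η_i(θ₁) θ₂ⁱ` equals the divergence rate
`Σ_{(x,y)∈E} p_{θ₁}⁽²⁾(x,y) log(w_{θ₁}(y|x)/w_{θ₂}(y|x))`. -/
theorem canonical_divergence_eq_divergence_rate
    {X : Type*} [Fintype X] [DecidableEq X] {d : ℕ}
    (hX : 2 ≤ Fintype.card X)
    (E : Finset (X × X)) (hconn : StronglyConnected E)
    (C : X → X → ℝ) (F : Fin d → X → X → ℝ) (K : (Fin d → ℝ) → X → ℝ)
    (ψ : (Fin d → ℝ) → ℝ) (w : (Fin d → ℝ) → X → X → ℝ)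
    (hlog : ∀ θ x y, (x, y) ∈ E →
      Real.log (w θ x y) = C x y + ∑ i, θ i * F i x y + K θ y - K θ x - ψ θ)
    (hzero : ∀ θ x y, (x, y) ∉ E → w θ x y = 0)
    (hker : ∀ θ, IsMarkovKernel E (w θ))
    (p : (Fin d → ℝ) → X → ℝ) (hp : ∀ θ, IsStationaryDistrib (w θ) (p θ))
    (θ₁ θ₂ : Fin d → ℝ) :
    ((∑ i, θ₁ i * (∑ e ∈ E, p θ₁ e.1 * w θ₁ e.1 e.2 * F i e.1 e.2)) - ψ θ₁)
        + ψ θ₂ - ∑ i, (∑ e ∈ E, p θ₁ e.1 * w θ₁ e.1 e.2 * F i e.1 e.2) * θ₂ i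
      = ∑ e ∈ E, p θ₁ e.1 * w θ₁ e.1 e.2 *
          Real.log (w θ₁ e.1 e.2 / w θ₂ e.1 e.2) := by
  classical
  set P : X → X → ℝ := fun x y => p θ₁ x * w θ₁ x y with hP
  have hPzero : ∀ e : X × X, e ∉ E → P e.1 e.2 = 0 := by
    intro e he
    simp [hP, hzero θ₁ e.1 e.2 he]
  -- extend sums over E to full double sums
  have sumE : ∀ f : X → X → ℝ,
      ∑ e ∈ E, P e.1 e.2 * f e.1 e.2 = ∑ x, ∑ y, P x y * f x y := by
    intro f
    rw [← Fintype.sum_prod_type (f := fun e : X × X => P e.1 e.2 * f e.1 e.2)]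
    exact Finset.sum_subset (Finset.subset_univ E)
      (fun e _ he => by rw [hPzero e he, zero_mul])
  have hrow : ∀ x, ∑ y, P x y = p θ₁ x := by
    intro x
    rw [hP]
    simp only []
    rw [← Finset.mul_sum, (hker θ₁).2.1 x, mul_one]
  have hmass : ∑ x, ∑ y, P x y = 1 := by
    simp only [hrow]
    exact (hp θ₁).2.1
  have hstatY : ∀ g : X → ℝ, ∑ x, ∑ y, P x y * g y = ∑ y, p θ₁ y * g y := by
    intro g
    rw [Finset.sum_comm]
    refine Finset.sum_congr rfl fun y _ => ?_
    rw [← Finset.sum_mul, (hp θ₁).2.2 y]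
  have hstatX : ∀ g : X → ℝ, ∑ x, ∑ y, P x y * g x = ∑ x, p θ₁ x * g x := by
    intro g
    refine Finset.sum_congr rfl fun x _ => ?_
    rw [← Finset.sum_mul, hrow x]
  -- rewrite the RHS using the log formula
  have hRHS : ∑ e ∈ E, p θ₁ e.1 * w θ₁ e.1 e.2 *
        Real.log (w θ₁ e.1 e.2 / w θ₂ e.1 e.2)
      = ∑ x, ∑ y, P x y *
          ((∑ i, (θ₁ i - θ₂ i) * F i x y) + ((K θ₁ y - K θ₂ y) - (K θ₁ x - K θ₂ x))
            + (ψ θ₂ - ψ θ₁)) := by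
    rw [← sumE]
    refine Finset.sum_congr rfl fun e he => ?_
    have h1 : 0 < w θ₁ e.1 e.2 := ((hker θ₁).2.2 e.1 e.2).2 (by simpa using he)
    have h2 : 0 < w θ₂ e.1 e.2 := ((hker θ₂).2.2 e.1 e.2).2 (by simpa using he)
    rw [Real.log_div h1.ne' h2.ne', hlog θ₁ e.1 e.2 (by simpa using he),
      hlog θ₂ e.1 e.2 (by simpa using he)]
    have hsub : ∑ i, (θ₁ i - θ₂ i) * F i e.1 e.2
        = ∑ i, θ₁ i * F i e.1 e.2 - ∑ i, θ₂ i * F i e.1 e.2 := by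
      rw [← Finset.sum_sub_distrib]
      exact Finset.sum_congr rfl fun i _ => by ring
    rw [hP]
    simp only []
    rw [hsub]
    ring
  rw [hRHS]
  -- expand each term of the double sum
  have hexp : ∀ x y, P x y *
        ((∑ i, (θ₁ i - θ₂ i) * F i x y) + ((K θ₁ y - K θ₂ y) - (K θ₁ x - K θ₂ x))
          + (ψ θ₂ - ψ θ₁))
      = (∑ i, (θ₁ i - θ₂ i) * (P x y * F i x y))
        + ((P x y * (K θ₁ y - K θ₂ y) - P x y * (K θ₁ x - K θ₂ x))
           + P x y * (ψ θ₂ - ψ θ₁)) := by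
    intro x y
    have : P x y * ∑ i, (θ₁ i - θ₂ i) * F i x y
        = ∑ i, (θ₁ i - θ₂ i) * (P x y * F i x y) := by
      rw [Finset.mul_sum]
      exact Finset.sum_congr rfl fun i _ => by ring
    rw [mul_add, mul_add, this]
    ring
  simp only [hexp]
  rw [Finset.sum_congr rfl fun x _ => Finset.sum_add_distrib, Finset.sum_add_distrib,
    Finset.sum_congr rfl fun x _ => Finset.sum_add_distrib, Finset.sum_add_distrib,
    Finset.sum_congr rfl fun x _ => Finset.sum_sub_distrib _ _, Finset.sum_sub_distrib]
  -- the F part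
  have hF : ∑ x, ∑ y, ∑ i, (θ₁ i - θ₂ i) * (P x y * F i x y)
      = ∑ i, (θ₁ i - θ₂ i) * ∑ x, ∑ y, P x y * F i x y := by
    rw [Finset.sum_congr rfl fun x _ => Finset.sum_comm, Finset.sum_comm]
    exact Finset.sum_congr rfl fun i _ => by
      rw [Finset.mul_sum]
      exact Finset.sum_congr rfl fun x _ => by rw [Finset.mul_sum]
  have hK : ∑ x, ∑ y, P x y * (K θ₁ y - K θ₂ y) = ∑ x, ∑ y, P x y * (K θ₁ x - K θ₂ x) := by
    rw [hstatY (fun z => K θ₁ z - K θ₂ z), hstatX (fun z => K θ₁ z - K θ₂ z)]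
  have hc : ∑ x, ∑ y, P x y * (ψ θ₂ - ψ θ₁) = ψ θ₂ - ψ θ₁ := by
    rw [Finset.sum_congr rfl fun x _ => (Finset.sum_mul ..).symm, ← Finset.sum_mul,
      hmass, one_mul]
  rw [hF, hK, hc, sub_self, zero_add]
  have sumE' : ∀ i, ∑ e ∈ E, p θ₁ e.1 * w θ₁ e.1 e.2 * F i e.1 e.2 = ∑ x, ∑ y, P x y * F i x y :=
    fun i => sumE (F i)
  simp only [sumE']
  rw [show ∀ a b c e : ℝ, a - b + c - e = (a - e) + (c - b) by intros; ring]
  rw [← Finset.sum_sub_distrib]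
  congr 1
  exact Finset.sum_congr rfl fun i _ => by ring
end

section
/- Let {w_θ : θ ∈ ℝ^d} ⊆ W(X,E) be an exponential family given by C, F_1, …, F_d, K, ψ. For w ∈ W(X,E) set p_w^(2)(x,y) = p_w(x) w(y|x) and define the divergence D(w | w') = Σ_{(x,y)∈E} p_w^(2)(x,y) log( w(y|x)/w'(y|x) ), and for θ ∈ ℝ^d set η_i(θ) = Σ_{(x,y)∈E} p_{w_θ}^(2)(x,y) F_i(x,y). Then for all θ_1, θ_2, θ_3 ∈ ℝ^d: D(w_{θ_1} | w_{θ_2}) + D(w_{θ_2} | w_{θ_3}) − D(w_{θ_1} | w_{θ_3}) = Σ_{i=1}^d (η_i(θ_1) − η_i(θ_2)) (θ_3^i − θ_2^i). -/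
open scoped BigOperators

/-- `p` is the (positive) stationary distribution of the Markov kernel `w`. -/
def IsStationaryDistKernel {X : Type*} [Fintype X] (w : X → X → ℝ) (p : X → ℝ) : Prop :=
  (∀ x, 0 < p x) ∧ (∑ x, p x = 1) ∧ (∀ y, ∑ x, p x * w x y = p y)

section Aux

variable {X : Type*} [Fintype X]

private lemma sum_E_eq_univ (E : Finset (X × X)) (v : X → X → ℝ)
    (hz : ∀ x y, (x, y) ∉ E → v x y = 0) (g : X × X → ℝ) :
    ∑ e ∈ E, v e.1 e.2 * g e = ∑ x, ∑ y, v x y * g (x, y) := by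
  have h : ∑ e : X × X, v e.1 e.2 * g e = ∑ x : X, ∑ y : X, v x y * g (x, y) :=
    Fintype.sum_prod_type (fun e => v e.1 e.2 * g e)
  rw [← h]
  apply Finset.sum_subset (Finset.subset_univ E)
  intro e _ he
  rw [hz e.1 e.2 (by simpa using he)]
  ring

private lemma sum_E_one (E : Finset (X × X)) (w : X → X → ℝ) (p : X → ℝ)
    (hz : ∀ x y, (x, y) ∉ E → w x y = 0)
    (hrow : ∀ x, ∑ y, w x y = 1) (hptot : ∑ x, p x = 1) :
    ∑ e ∈ E, p e.1 * w e.1 e.2 = 1 := by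
  have hz' : ∀ x y, (x, y) ∉ E → p x * w x y = 0 := fun x y h => by rw [hz x y h]; ring
  have h := sum_E_eq_univ E (fun x y => p x * w x y) hz' (fun _ => 1)
  simp only [mul_one] at h
  rw [h]
  calc ∑ x, ∑ y, p x * w x y = ∑ x, p x * ∑ y, w x y := by
        simp [Finset.mul_sum]
    _ = 1 := by simp [hrow, hptot]

private lemma sum_E_tele (E : Finset (X × X)) (w : X → X → ℝ) (p : X → ℝ)
    (hz : ∀ x y, (x, y) ∉ E → w x y = 0)
    (hrow : ∀ x, ∑ y, w x y = 1) (hstat : ∀ y, ∑ x, p x * w x y = p y) (g : X → ℝ) :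
    ∑ e ∈ E, p e.1 * w e.1 e.2 * (g e.2 - g e.1) = 0 := by
  have hz' : ∀ x y, (x, y) ∉ E → p x * w x y = 0 := fun x y h => by rw [hz x y h]; ring
  rw [sum_E_eq_univ E (fun x y => p x * w x y) hz' (fun e => g e.2 - g e.1)]
  have h1 : ∑ x : X, ∑ y : X, p x * w x y * (g y - g x)
      = (∑ x : X, ∑ y : X, p x * w x y * g y) - ∑ x : X, ∑ y : X, p x * w x y * g x := by
    simp [mul_sub, Finset.sum_sub_distrib]
  rw [h1]
  have h2 : (∑ x : X, ∑ y : X, p x * w x y * g y) = ∑ y : X, p y * g y := by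
    rw [Finset.sum_comm]
    refine Finset.sum_congr rfl fun y _ => ?_
    rw [← hstat y, Finset.sum_mul]
  have h3 : (∑ x : X, ∑ y : X, p x * w x y * g x) = ∑ x : X, p x * g x := by
    refine Finset.sum_congr rfl fun x _ => ?_
    calc ∑ y : X, p x * w x y * g x = p x * g x * ∑ y : X, w x y := by
          rw [Finset.mul_sum]; exact Finset.sum_congr rfl fun y _ => by ring
      _ = p x * g x := by rw [hrow x, mul_one]
  rw [h2, h3, sub_self]

end Aux

/-- generalized Pythagorean-type relation. For an exponential
family `{w_θ} ⊆ W(X,E)` with stationary distributions `p_θ`, divergence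
`D(w|w') = Σ_{(x,y)∈E} p_w(x) w(y|x) log(w(y|x)/w'(y|x))` and expectation
parameters `η_i(θ) = Σ_{(x,y)∈E} p_θ(x) w_θ(y|x) F_i(x,y)`, one has
`D(w_{θ₁}|w_{θ₂}) + D(w_{θ₂}|w_{θ₃}) − D(w_{θ₁}|w_{θ₃})
  = Σ_i (η_i(θ₁) − η_i(θ₂)) (θ₃ⁱ − θ₂ⁱ)`. -/
theorem divergence_triangle_relation
    {X : Type*} [Fintype X] [DecidableEq X] {d : ℕ}
    (hX : 2 ≤ Fintype.card X)
    (E : Finset (X × X)) (hconn : StronglyConnected E)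
    (C : X → X → ℝ) (F : Fin d → X → X → ℝ) (K : (Fin d → ℝ) → X → ℝ)
    (ψ : (Fin d → ℝ) → ℝ) (w : (Fin d → ℝ) → X → X → ℝ)
    (hlog : ∀ θ x y, (x, y) ∈ E →
      Real.log (w θ x y) = C x y + ∑ i, θ i * F i x y + K θ y - K θ x - ψ θ)
    (hzero : ∀ θ x y, (x, y) ∉ E → w θ x y = 0)
    (hker : ∀ θ, IsMarkovKernel E (w θ))
    (p : (Fin d → ℝ) → X → ℝ) (hp : ∀ θ, IsStationaryDistKernel (w θ) (p θ))
    (θ₁ θ₂ θ₃ : Fin d → ℝ) :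
    (∑ e ∈ E, p θ₁ e.1 * w θ₁ e.1 e.2 * Real.log (w θ₁ e.1 e.2 / w θ₂ e.1 e.2))
      + (∑ e ∈ E, p θ₂ e.1 * w θ₂ e.1 e.2 * Real.log (w θ₂ e.1 e.2 / w θ₃ e.1 e.2))
      - (∑ e ∈ E, p θ₁ e.1 * w θ₁ e.1 e.2 * Real.log (w θ₁ e.1 e.2 / w θ₃ e.1 e.2))
    = ∑ i, ((∑ e ∈ E, p θ₁ e.1 * w θ₁ e.1 e.2 * F i e.1 e.2)
            - (∑ e ∈ E, p θ₂ e.1 * w θ₂ e.1 e.2 * F i e.1 e.2)) * (θ₃ i - θ₂ i) := by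
  have key : ∀ a b : Fin d → ℝ,
      (∑ e ∈ E, p a e.1 * w a e.1 e.2 * Real.log (w a e.1 e.2 / w b e.1 e.2))
        = (∑ i, (a i - b i) * ∑ e ∈ E, p a e.1 * w a e.1 e.2 * F i e.1 e.2)
          + (ψ b - ψ a) := by
    intro a b
    obtain ⟨hpos, hptot, hstat⟩ := hp a
    have hrow := (hker a).2.1
    have step : ∀ e ∈ E, p a e.1 * w a e.1 e.2 * Real.log (w a e.1 e.2 / w b e.1 e.2)
        = (∑ i, (a i - b i) * (p a e.1 * w a e.1 e.2 * F i e.1 e.2))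
          + p a e.1 * w a e.1 e.2 * ((fun x => K a x - K b x) e.2 - (fun x => K a x - K b x) e.1)
          + (ψ b - ψ a) * (p a e.1 * w a e.1 e.2) := by
      intro e he
      have he' : (e.1, e.2) ∈ E := by simpa using he
      have hwa : 0 < w a e.1 e.2 := ((hker a).2.2 e.1 e.2).2 he'
      have hwb : 0 < w b e.1 e.2 := ((hker b).2.2 e.1 e.2).2 he'
      rw [Real.log_div hwa.ne' hwb.ne', hlog a e.1 e.2 he', hlog b e.1 e.2 he']
      have hsum : ∑ i, (a i - b i) * (p a e.1 * w a e.1 e.2 * F i e.1 e.2)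
          = p a e.1 * w a e.1 e.2 * (∑ i, a i * F i e.1 e.2 - ∑ i, b i * F i e.1 e.2) := by
        rw [← Finset.sum_sub_distrib, Finset.mul_sum]
        exact Finset.sum_congr rfl fun i _ => by ring
      rw [hsum]
      ring
    rw [Finset.sum_congr rfl step, Finset.sum_add_distrib, Finset.sum_add_distrib,
      sum_E_tele E (w a) (p a) (hzero a) hrow hstat (fun x => K a x - K b x),
      ← Finset.mul_sum, sum_E_one E (w a) (p a) (hzero a) hrow hptot, mul_one,
      Finset.sum_comm]
    have : ∀ i ∈ Finset.univ, (∑ e ∈ E, (a i - b i) * (p a e.1 * w a e.1 e.2 * F i e.1 e.2))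
        = (a i - b i) * ∑ e ∈ E, p a e.1 * w a e.1 e.2 * F i e.1 e.2 := by
      intro i _; rw [Finset.mul_sum]
    rw [Finset.sum_congr rfl this]
    ring
  rw [key θ₁ θ₂, key θ₂ θ₃, key θ₁ θ₃]
  have hcomb : ((∑ i, (θ₁ i - θ₂ i) * ∑ e ∈ E, p θ₁ e.1 * w θ₁ e.1 e.2 * F i e.1 e.2) + (ψ θ₂ - ψ θ₁))
      + ((∑ i, (θ₂ i - θ₃ i) * ∑ e ∈ E, p θ₂ e.1 * w θ₂ e.1 e.2 * F i e.1 e.2) + (ψ θ₃ - ψ θ₂))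
      - ((∑ i, (θ₁ i - θ₃ i) * ∑ e ∈ E, p θ₁ e.1 * w θ₁ e.1 e.2 * F i e.1 e.2) + (ψ θ₃ - ψ θ₁))
      = ∑ i, ((θ₁ i - θ₂ i) * (∑ e ∈ E, p θ₁ e.1 * w θ₁ e.1 e.2 * F i e.1 e.2)
          + (θ₂ i - θ₃ i) * (∑ e ∈ E, p θ₂ e.1 * w θ₂ e.1 e.2 * F i e.1 e.2)
          - (θ₁ i - θ₃ i) * (∑ e ∈ E, p θ₁ e.1 * w θ₁ e.1 e.2 * F i e.1 e.2)) := by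
    rw [Finset.sum_sub_distrib, Finset.sum_add_distrib]
    ring
  rw [hcomb]
  exact Finset.sum_congr rfl fun i _ => by ring
end
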